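/- arXiv:1703.08734 — 6 statements merged into one kernel-verified Lean document; each statement's English description precedes it below -/
import Mathlib

section
/- The matrix wreath product A ≀ B = B ⊕ Lin(B, B⊗_F A), equipped with the multiplication of B, the multiplication fg = (1⊗μ)∘(f⊗1)∘g on Lin(B, B⊗_F A), and the B-actions (fb)(b') = f(bb'), (bf)(b') = (b⊗1)f(b'), is an associative F-algebra. -/
open TensorProduct

noncomputable section

universe u v w

/-- `pwAux mul x n = x^(n+1)` (left-normed powers) with respect to a multiplication `mul`. -/
def pwAux {P : Type*} (mul : P → P → P) (x : P) : ℕ → P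
  | 0 => x
  | n + 1 => mul x (pwAux mul x n)

/-- `pw mul x n = x^n` for `n ≥ 1`, with the junk value `pw mul x 0 = 0`. -/
def pw {P : Type*} [Zero P] (mul : P → P → P) (x : P) : ℕ → P
  | 0 => 0
  | n + 1 => pwAux mul x n

/-- Every element of `s` is nilpotent with respect to `mul`. -/
def IsNilMul {P : Type*} [Zero P] (mul : P → P → P) (s : Set P) : Prop :=
  ∀ x ∈ s, ∃ n : ℕ, 1 ≤ n ∧ pw mul x n = 0

/-- A (not necessarily unital) ring is nil iff every element is nilpotent. -/
def IsNilRing (R : Type*) [NonUnitalRing R] : Prop :=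
  IsNilMul (· * ·) (Set.univ : Set R)

/-- Every element of `s` satisfies a nonzero polynomial over `F` with zero constant term. -/
def IsAlgebraicMul (F : Type*) [Field F] {P : Type*} [AddCommGroup P] [Module F P]
    (mul : P → P → P) (s : Set P) : Prop :=
  ∀ x ∈ s, ∃ p : Polynomial F, p ≠ 0 ∧ p.coeff 0 = 0 ∧ (p.sum fun i c => c • pw mul x i) = 0

/-- An `F`-algebra is algebraic iff every element satisfies a nonzero polynomial over `F`
with zero constant term (equivalently, generates a finite-dimensional subalgebra). -/
def IsAlgebraicRing (F : Type*) [Field F] (R : Type*) [NonUnitalRing R] [Module F R] : Prop :=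
  IsAlgebraicMul F (· * ·) (Set.univ : Set R)

/-- `R` is stable nil: all matrix algebras `M_n(R)` are nil. -/
def IsStableNil (R : Type*) [NonUnitalRing R] : Prop :=
  ∀ n : ℕ, IsNilRing (Matrix (Fin n) (Fin n) R)

/-- `R` is stable algebraic: all matrix algebras `M_n(R)` are algebraic over `F`. -/
def IsStableAlgebraic (F : Type*) [Field F] (R : Type*) [NonUnitalRing R] [Module F R] : Prop :=
  ∀ n : ℕ, IsAlgebraicRing F (Matrix (Fin n) (Fin n) R)

/-- A (not necessarily unital) ring is Jacobson radical iff every element `a` is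
quasi-regular: there is `a'` with `a + a' + aa' = 0` and `a + a' + a'a = 0`. -/
def IsJacobsonRadical (R : Type*) [NonUnitalRing R] : Prop :=
  ∀ a : R, ∃ a' : R, a + a' + a * a' = 0 ∧ a + a' + a' * a = 0

/-- `C` is finitely generated as a (non-unital) `F`-algebra. -/
def IsFinGenAlg (F : Type*) [Field F] (C : Type*) [NonUnitalRing C] [Module F C]
    [SMulCommClass F C C] [IsScalarTower F C C] : Prop :=
  ∃ s : Finset C, NonUnitalAlgebra.adjoin F (s : Set C) = ⊤

/-- `IsWord mul s k x` : `x` is a product (with some bracketing) of `k` factors from `s`. -/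
inductive IsWord {P : Type*} (mul : P → P → P) (s : Set P) : ℕ → P → Prop
  | base {x : P} : x ∈ s → IsWord mul s 1 x
  | mul {m n : ℕ} {x y : P} : IsWord mul s m x → IsWord mul s n y →
      IsWord mul s (m + n) (mul x y)

/-- The span `U^{≤n}` of all products of at most `n` factors from `U` (w.r.t. `mul`). -/
def wordSpan (F : Type*) [Field F] {P : Type*} [AddCommGroup P] [Module F P]
    (mul : P → P → P) (U : Submodule F P) (n : ℕ) : Submodule F P :=
  Submodule.span F {x | ∃ k, 1 ≤ k ∧ k ≤ n ∧ IsWord mul (U : Set P) k x}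

/-- The growth function `g(U, n) = dim_F U^{≤n}` of the subspace `U` w.r.t. `mul`. -/
def growthFn (F : Type*) [Field F] {P : Type*} [AddCommGroup P] [Module F P]
    (mul : P → P → P) (U : Submodule F P) (n : ℕ) : ℕ :=
  Module.finrank F (wordSpan F mul U n)

/-- `GKdimLE F R d` : the Gelfand–Kirillov dimension of the `F`-algebra `R` is at most `d`,
i.e. for every finite-dimensional subspace `U` and every `α > d` one has
`g(U, n) ≼ n^α`. -/
def GKdimLE (F : Type*) [Field F] (R : Type*) [NonUnitalRing R] [Module F R] (d : ℝ) : Prop :=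
  ∀ U : Submodule F R, FiniteDimensional F U → ∀ α : ℝ, d < α →
    ∃ c : ℕ, 0 < c ∧ ∀ n : ℕ, (growthFn F (· * ·) U n : ℝ) ≤ c * ((c * n : ℕ) : ℝ) ^ α

/-- `GKdimEQ F R d` : the Gelfand–Kirillov dimension of `R` is exactly `d`. -/
def GKdimEQ (F : Type*) [Field F] (R : Type*) [NonUnitalRing R] [Module F R] (d : ℝ) : Prop :=
  GKdimLE F R d ∧ ∀ e : ℝ, GKdimLE F R e → d ≤ e

section Wreath

variable (F : Type*) [Field F]
variable (A : Type*) [NonUnitalRing A] [Module F A] [SMulCommClass F A A] [IsScalarTower F A A]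
variable (B : Type*) [NonUnitalRing B] [Module F B] [SMulCommClass F B B] [IsScalarTower F B B]

/-- The multiplication `fg = (1 ⊗ μ) ∘ (f ⊗ 1) ∘ g` on `Lin(B, B ⊗ A)`. -/
def wrMul (f g : B →ₗ[F] B ⊗[F] A) : B →ₗ[F] B ⊗[F] A :=
  (LinearMap.lTensor B (LinearMap.mul' F A)) ∘ₗ (TensorProduct.assoc F B A A).toLinearMap ∘ₗ
    (LinearMap.rTensor A f) ∘ₗ g

/-- The left action of `B` on `Lin(B, B ⊗ A)` : `(bf)(b') = (b ⊗ 1) f(b')`. -/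
def actL (b : B) (f : B →ₗ[F] B ⊗[F] A) : B →ₗ[F] B ⊗[F] A :=
  (LinearMap.rTensor A (LinearMap.mulLeft F b)) ∘ₗ f

/-- The right action of `B` on `Lin(B, B ⊗ A)` : `(fb)(b') = f(bb')`. -/
def actR (f : B →ₗ[F] B ⊗[F] A) (b : B) : B →ₗ[F] B ⊗[F] A :=
  f ∘ₗ LinearMap.mulLeft F b

/-- The multiplication of the matrix wreath product `A ≀ B = B ⊕ Lin(B, B ⊗ A)`,
extending the multiplications of `B` and of `Lin(B, B ⊗ A)` via the two `B`-actions. -/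
def wm (x y : B × (B →ₗ[F] B ⊗[F] A)) : B × (B →ₗ[F] B ⊗[F] A) :=
  (x.1 * y.1, wrMul F A B x.2 y.2 + actL F A B x.1 y.2 + actR F A B x.2 y.1)

/-- `S(A,B)` : all `f : B → B ⊗ A` with `f(B) ⊆ V ⊗ A` for some finite-dimensional
subspace `V ⊆ B`. -/
def SAB : Set (B →ₗ[F] B ⊗[F] A) :=
  {f | ∃ V : Submodule F B, FiniteDimensional F V ∧
    LinearMap.range f ≤ LinearMap.range (LinearMap.rTensor A V.subtype)}

/-- The matrix entry `a_{ij}` of `f : B → B ⊗ A` w.r.t. a basis `β` of `B`, determined by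
`f(β j) = Σ_i (β i) ⊗ a_{ij}`. -/
def entryOf {I : Type*} [DecidableEq I] (β : Module.Basis I F B) (f : B →ₗ[F] B ⊗[F] A)
    (i j : I) : A :=
  (TensorProduct.finsuppScalarLeft F A I
    ((LinearMap.rTensor A β.repr.toLinearMap) (f (β j)))) i

/-- `M_∞(A)` : the elements of `Lin(B, B ⊗ A)` whose matrix w.r.t. the basis `β` has only
finitely many nonzero entries. -/
def MinfSet {I : Type*} [DecidableEq I] (β : Module.Basis I F B) : Set (B →ₗ[F] B ⊗[F] A) :=
  {f | {p : I × I | entryOf F A B β f p.1 p.2 ≠ 0}.Finite}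

end Wreath

section UnitalB

variable (F : Type*) [Field F]
variable (A : Type*) [NonUnitalRing A] [Module F A] [SMulCommClass F A A] [IsScalarTower F A A]
variable (B : Type*) [Ring B] [Algebra F B]

/-- The element `c_γ : b ↦ 1 ⊗ γ(b)` of `Lin(B, B ⊗ A)`. -/
def cgam (γ : B →ₗ[F] A) : B →ₗ[F] B ⊗[F] A :=
  (TensorProduct.mk F B A 1) ∘ₗ γ

/-- `GammaWord γ V k a` : `a` is a product `γ(v₁)⋯γ(v_r)` with `v_j ∈ V^{i_j}` and
`i₁ + ⋯ + i_r = k`, `i_j ≥ 1`. -/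
inductive GammaWord (γ : B →ₗ[F] A) (V : Submodule F B) : ℕ → A → Prop
  | base {i : ℕ} (hi : 1 ≤ i) {b : B} (hb : b ∈ wordSpan F (· * ·) V i) :
      GammaWord γ V i (γ b)
  | mul {m n : ℕ} {a a' : A} : GammaWord γ V m a → GammaWord γ V n a' →
      GammaWord γ V (m + n) (a * a')

/-- The subspace `W_n = Σ_{i₁+⋯+i_r ≤ n} γ(V^{i₁})⋯γ(V^{i_r})` of `A`. -/
def Wspan (γ : B →ₗ[F] A) (V : Submodule F B) (n : ℕ) : Submodule F A :=
  Submodule.span F {a | ∃ k, k ≤ n ∧ GammaWord F A B γ V k a}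

/-- `w_γ(n) = dim_F W_n`. -/
def wfn (γ : B →ₗ[F] A) (V : Submodule F B) (n : ℕ) : ℕ :=
  Module.finrank F (Wspan F A B γ V n)

end UnitalB

section PrimePrimitive

variable {P : Type v} [AddCommGroup P]

/-- `I` is a two-sided ideal of the subalgebra of the ambient algebra `(P, mul)` given by the
additive subgroup `T`. -/
def IsIdealIn (mul : P → P → P) (T I : AddSubgroup P) : Prop :=
  I ≤ T ∧ ∀ x ∈ T, ∀ y ∈ I, mul x y ∈ I ∧ mul y x ∈ I

/-- The subalgebra `T` of `(P, mul)` is a prime algebra: the product of two nonzero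
two-sided ideals is nonzero. -/
def IsPrimeIn (mul : P → P → P) (T : AddSubgroup P) : Prop :=
  ∀ I J : AddSubgroup P, IsIdealIn mul T I → IsIdealIn mul T J →
    (∀ a ∈ I, ∀ b ∈ J, mul a b = 0) → I = ⊥ ∨ J = ⊥

/-- The subalgebra `T` of `(P, mul)` is a (left) primitive algebra: it has a faithful
irreducible left module. -/
def IsPrimitiveIn (mul : P → P → P) (T : AddSubgroup P) : Prop :=
  ∃ (M : Type v) (_ : AddCommGroup M) (ρ : P → AddMonoid.End M),
    (∀ x ∈ T, ∀ y ∈ T, ρ (x + y) = ρ x + ρ y) ∧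
    (∀ x ∈ T, ∀ y ∈ T, ρ (mul x y) = ρ x * ρ y) ∧
    Set.InjOn ρ (T : Set P) ∧
    (∃ x ∈ T, ∃ m : M, (ρ x) m ≠ 0) ∧
    (∀ m : M, m ≠ 0 → ∀ y : M, ∃ x ∈ T, (ρ x) m = y)

end PrimePrimitive

/-- A (not necessarily unital) ring is (left) primitive: it has a faithful irreducible
left module. -/
def IsPrimitiveRing (R : Type v) [NonUnitalRing R] : Prop :=
  ∃ (M : Type v) (_ : AddCommGroup M) (ρ : R →ₙ+* AddMonoid.End M),
    Function.Injective ρ ∧ (∃ r : R, ∃ m : M, (ρ r) m ≠ 0) ∧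
    (∀ m : M, m ≠ 0 → ∀ y : M, ∃ r : R, (ρ r) m = y)

/-- The multiplication of `M_∞(A)`, realized as finitely supported `ℕ × ℕ` matrices over `A`. -/
def minfMul {A : Type*} [NonUnitalRing A] (x y : (ℕ × ℕ) →₀ A) : (ℕ × ℕ) →₀ A :=
  x.sum fun p a => y.sum fun q b => if p.2 = q.1 then Finsupp.single (p.1, q.2) (a * b) else 0

end


set_option linter.unusedSectionVars false

section WreathAux

variable (F : Type*) [Field F]
variable (A : Type*) [NonUnitalRing A] [Module F A] [SMulCommClass F A A] [IsScalarTower F A A]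
variable (B : Type*) [NonUnitalRing B] [Module F B] [SMulCommClass F B B] [IsScalarTower F B B]

noncomputable def Phi (f : B →ₗ[F] B ⊗[F] A) : B ⊗[F] A →ₗ[F] B ⊗[F] A :=
  (LinearMap.lTensor B (LinearMap.mul' F A)) ∘ₗ (TensorProduct.assoc F B A A).toLinearMap ∘ₗ
    LinearMap.rTensor A f

lemma wrMul_eq_Phi (f g : B →ₗ[F] B ⊗[F] A) : wrMul F A B f g = Phi F A B f ∘ₗ g := rfl

lemma Phi_tmul (f : B →ₗ[F] B ⊗[F] A) (b : B) (a : A) :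
    Phi F A B f (b ⊗ₜ a) = LinearMap.lTensor B (LinearMap.mulRight F a) (f b) := by
  have key : ∀ t : B ⊗[F] A,
      (LinearMap.lTensor B (LinearMap.mul' F A))
        ((TensorProduct.assoc F B A A).toLinearMap (t ⊗ₜ a)) =
      LinearMap.lTensor B (LinearMap.mulRight F a) t := by
    intro t
    induction t using TensorProduct.induction_on with
    | zero => simp only [TensorProduct.zero_tmul, map_zero]
    | tmul b' a' =>
        simp only [LinearEquiv.coe_coe, TensorProduct.assoc_tmul,
          LinearMap.lTensor_tmul, LinearMap.mul'_apply, LinearMap.mulRight_apply]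
    | add u v hu hv =>
        rw [TensorProduct.add_tmul, map_add, map_add, hu, hv, map_add]
  have h1 : (LinearMap.rTensor A f) (b ⊗ₜ a) = f b ⊗ₜ a := rfl
  simp only [Phi, LinearMap.comp_apply, h1]
  exact key (f b)

lemma Phi_lTensor_comm (f : B →ₗ[F] B ⊗[F] A) (a : A) (t : B ⊗[F] A) :
    Phi F A B f (LinearMap.lTensor B (LinearMap.mulRight F a) t) =
      LinearMap.lTensor B (LinearMap.mulRight F a) (Phi F A B f t) := by
  induction t using TensorProduct.induction_on with
  | zero => simp
  | tmul b' a' =>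
      rw [LinearMap.lTensor_tmul, Phi_tmul, Phi_tmul, ← LinearMap.lTensor_comp_apply]
      congr 2
      ext x
      simp [mul_assoc]
  | add u v hu hv => simp only [map_add, hu, hv]

lemma Phi_comp (f g : B →ₗ[F] B ⊗[F] A) :
    Phi F A B (Phi F A B f ∘ₗ g) = Phi F A B f ∘ₗ Phi F A B g := by
  apply TensorProduct.ext'
  intro b a
  rw [Phi_tmul, LinearMap.comp_apply, LinearMap.comp_apply, Phi_tmul]
  exact (Phi_lTensor_comm F A B f a (g b)).symm

lemma wrMul_assoc (f g h : B →ₗ[F] B ⊗[F] A) :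
    wrMul F A B (wrMul F A B f g) h = wrMul F A B f (wrMul F A B g h) := by
  simp only [wrMul_eq_Phi, Phi_comp, LinearMap.comp_assoc]

lemma mulLeft_add' (b b' : B) :
    LinearMap.mulLeft F (b + b') = LinearMap.mulLeft F b + LinearMap.mulLeft F b' := by
  ext x; simp [add_mul]

lemma mulLeft_smul' (c : F) (b : B) :
    LinearMap.mulLeft F (c • b) = c • LinearMap.mulLeft F b := by
  ext x; simp [smul_mul_assoc]

lemma Phi_actL (b : B) (f : B →ₗ[F] B ⊗[F] A) :
    Phi F A B (actL F A B b f) =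
      LinearMap.rTensor A (LinearMap.mulLeft F b) ∘ₗ Phi F A B f := by
  apply TensorProduct.ext'
  intro b' a
  rw [Phi_tmul, LinearMap.comp_apply, Phi_tmul]
  have h : actL F A B b f b' = LinearMap.rTensor A (LinearMap.mulLeft F b) (f b') := rfl
  rw [h, ← LinearMap.comp_apply, LinearMap.lTensor_comp_rTensor,
    ← LinearMap.rTensor_comp_lTensor, LinearMap.comp_apply]

lemma wrMul_actL (b : B) (f g : B →ₗ[F] B ⊗[F] A) :
    wrMul F A B (actL F A B b f) g = actL F A B b (wrMul F A B f g) := by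
  rw [wrMul_eq_Phi, wrMul_eq_Phi, Phi_actL]; rfl

lemma Phi_actR (f : B →ₗ[F] B ⊗[F] A) (b : B) :
    Phi F A B (actR F A B f b) =
      Phi F A B f ∘ₗ LinearMap.rTensor A (LinearMap.mulLeft F b) := by
  apply TensorProduct.ext'
  intro b' a
  simp only [Phi_tmul, actR, LinearMap.comp_apply, LinearMap.rTensor_tmul, Phi_tmul]
  try rfl

lemma wrMul_actR (f : B →ₗ[F] B ⊗[F] A) (b : B) (g : B →ₗ[F] B ⊗[F] A) :
    wrMul F A B (actR F A B f b) g = wrMul F A B f (actL F A B b g) := by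
  rw [wrMul_eq_Phi, wrMul_eq_Phi, Phi_actR]; rfl

lemma actR_wrMul (f g : B →ₗ[F] B ⊗[F] A) (b : B) :
    actR F A B (wrMul F A B f g) b = wrMul F A B f (actR F A B g b) := by
  simp only [wrMul_eq_Phi, actR, LinearMap.comp_assoc]

lemma actR_actL (b b' : B) (f : B →ₗ[F] B ⊗[F] A) :
    actR F A B (actL F A B b f) b' = actL F A B b (actR F A B f b') := by
  simp only [actL, actR, LinearMap.comp_assoc]

lemma actR_actR (f : B →ₗ[F] B ⊗[F] A) (b b' : B) :
    actR F A B (actR F A B f b) b' = actR F A B f (b * b') := by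
  simp only [actR, LinearMap.comp_assoc]
  congr 1
  ext x
  simp [mul_assoc]

lemma actL_mul (b b' : B) (f : B →ₗ[F] B ⊗[F] A) :
    actL F A B (b * b') f = actL F A B b (actL F A B b' f) := by
  simp only [actL, ← LinearMap.comp_assoc, ← LinearMap.rTensor_comp]
  congr 2
  ext x
  simp [mul_assoc]

lemma Phi_add (f g : B →ₗ[F] B ⊗[F] A) :
    Phi F A B (f + g) = Phi F A B f + Phi F A B g := by
  apply TensorProduct.ext'
  intro b a
  simp [Phi_tmul]

lemma Phi_smul (c : F) (f : B →ₗ[F] B ⊗[F] A) :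
    Phi F A B (c • f) = c • Phi F A B f := by
  apply TensorProduct.ext'
  intro b a
  simp [Phi_tmul]

lemma wrMul_add_left (f g h : B →ₗ[F] B ⊗[F] A) :
    wrMul F A B (f + g) h = wrMul F A B f h + wrMul F A B g h := by
  simp only [wrMul_eq_Phi, Phi_add, LinearMap.add_comp]

lemma wrMul_add_right (f g h : B →ₗ[F] B ⊗[F] A) :
    wrMul F A B f (g + h) = wrMul F A B f g + wrMul F A B f h := by
  simp only [wrMul_eq_Phi, LinearMap.comp_add]

lemma wrMul_smul_left (c : F) (f g : B →ₗ[F] B ⊗[F] A) :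
    wrMul F A B (c • f) g = c • wrMul F A B f g := by
  simp only [wrMul_eq_Phi, Phi_smul, LinearMap.smul_comp]

lemma wrMul_smul_right (c : F) (f g : B →ₗ[F] B ⊗[F] A) :
    wrMul F A B f (c • g) = c • wrMul F A B f g := by
  simp only [wrMul_eq_Phi, LinearMap.comp_smul]

lemma actL_add_left (b b' : B) (f : B →ₗ[F] B ⊗[F] A) :
    actL F A B (b + b') f = actL F A B b f + actL F A B b' f := by
  simp only [actL, mulLeft_add', LinearMap.rTensor_add, LinearMap.add_comp]

lemma actL_add_right (b : B) (f g : B →ₗ[F] B ⊗[F] A) :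
    actL F A B b (f + g) = actL F A B b f + actL F A B b g := by
  simp only [actL, LinearMap.comp_add]

lemma actR_add_left (f g : B →ₗ[F] B ⊗[F] A) (b : B) :
    actR F A B (f + g) b = actR F A B f b + actR F A B g b := by
  simp only [actR, LinearMap.add_comp]

lemma actR_add_right (f : B →ₗ[F] B ⊗[F] A) (b b' : B) :
    actR F A B f (b + b') = actR F A B f b + actR F A B f b' := by
  simp only [actR, mulLeft_add', LinearMap.comp_add]

lemma actL_smul_left (c : F) (b : B) (f : B →ₗ[F] B ⊗[F] A) :
    actL F A B (c • b) f = c • actL F A B b f := by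
  simp only [actL, mulLeft_smul', LinearMap.rTensor_smul, LinearMap.smul_comp]

lemma actL_smul_right (c : F) (b : B) (f : B →ₗ[F] B ⊗[F] A) :
    actL F A B b (c • f) = c • actL F A B b f := by
  simp only [actL, LinearMap.comp_smul]

lemma actR_smul_left (c : F) (f : B →ₗ[F] B ⊗[F] A) (b : B) :
    actR F A B (c • f) b = c • actR F A B f b := by
  simp only [actR, LinearMap.smul_comp]

lemma actR_smul_right (c : F) (f : B →ₗ[F] B ⊗[F] A) (b : B) :
    actR F A B f (c • b) = c • actR F A B f b := by
  simp only [actR, mulLeft_smul', LinearMap.comp_smul]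

end WreathAux

/-- **Proposition (§2).** The matrix wreath product `A ≀ B = B ⊕ Lin(B, B ⊗_F A)`, equipped
with the multiplication of `B`, the multiplication `fg = (1⊗μ)∘(f⊗1)∘g` on `Lin(B, B ⊗_F A)`,
and the `B`-actions `(fb)(b') = f(bb')`, `(bf)(b') = (b⊗1)f(b')`, is an associative
`F`-algebra: the multiplication `wm` is `F`-bilinear and associative. -/
theorem matrix_wreath_product_is_associative_algebra
    (F : Type*) [Field F]
    (A : Type*) [NonUnitalRing A] [Module F A] [SMulCommClass F A A] [IsScalarTower F A A]
    (B : Type*) [NonUnitalRing B] [Module F B] [SMulCommClass F B B] [IsScalarTower F B B] :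
    (∀ x y z : B × (B →ₗ[F] B ⊗[F] A),
        wm F A B (wm F A B x y) z = wm F A B x (wm F A B y z)) ∧
    (∀ x y z : B × (B →ₗ[F] B ⊗[F] A),
        wm F A B (x + y) z = wm F A B x z + wm F A B y z) ∧
    (∀ x y z : B × (B →ₗ[F] B ⊗[F] A),
        wm F A B x (y + z) = wm F A B x y + wm F A B x z) ∧
    (∀ (c : F) (x y : B × (B →ₗ[F] B ⊗[F] A)),
        wm F A B (c • x) y = c • wm F A B x y ∧ wm F A B x (c • y) = c • wm F A B x y) := by
  refine ⟨fun x y z => ?_, fun x y z => ?_, fun x y z => ?_, fun c x y => ⟨?_, ?_⟩⟩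
  · unfold wm
    refine Prod.ext (mul_assoc _ _ _) ?_
    simp only [wrMul_add_left, wrMul_add_right, actL_add_right, actR_add_left,
      wrMul_assoc, wrMul_actL, wrMul_actR, actR_wrMul, actR_actL, actR_actR, actL_mul]
    abel
  · unfold wm
    refine Prod.ext (add_mul _ _ _) ?_
    simp only [Prod.fst_add, Prod.snd_add, wrMul_add_left, actL_add_left, actR_add_left]
    abel
  · unfold wm
    refine Prod.ext (mul_add _ _ _) ?_
    simp only [Prod.fst_add, Prod.snd_add, wrMul_add_right, actL_add_right, actR_add_right]
    abel
  · unfold wm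
    refine Prod.ext (smul_mul_assoc _ _ _) ?_
    simp only [Prod.smul_fst, Prod.smul_snd, wrMul_smul_left, actL_smul_left, actR_smul_left,
      smul_add]
  · unfold wm
    refine Prod.ext (mul_smul_comm _ _ _) ?_
    simp only [Prod.smul_fst, Prod.smul_snd, wrMul_smul_right, actL_smul_right, actR_smul_right,
      smul_add]
end

section
/- Suppose B contains no nonzero element b with dim_F bB < ∞. Then: (1) L_B·S(A,B) + S(A,B)·L_B ⊆ S(A,B), where the products are taken in Lin(B, B⊗_F Â); (2) L_B ∩ S(A,B) = (0). -/
open TensorProduct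

section Lemma1Aux

variable (F : Type*) [Field F]
variable (A : Type*) [NonUnitalRing A] [Module F A] [SMulCommClass F A A] [IsScalarTower F A A]
variable (B : Type*) [NonUnitalRing B] [Module F B] [SMulCommClass F B B] [IsScalarTower F B B]

lemma lemma1_key1 (b : B) :
    (LinearMap.lTensor B (LinearMap.mul' F (Unitization F A))) ∘ₗ
      (TensorProduct.assoc F B (Unitization F A) (Unitization F A)).toLinearMap ∘ₗ
      (LinearMap.rTensor (Unitization F A)
        (((TensorProduct.mk F B (Unitization F A)).flip 1) ∘ₗ LinearMap.mulLeft F b)) ∘ₗ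
      (LinearMap.lTensor B (Unitization.inrHom F F A : A →ₗ[F] Unitization F A)) =
    (LinearMap.lTensor B (Unitization.inrHom F F A : A →ₗ[F] Unitization F A)) ∘ₗ
      (LinearMap.rTensor A (LinearMap.mulLeft F b)) := by
  apply TensorProduct.ext'
  intro v a
  simp [LinearMap.mul'_apply]

set_option maxHeartbeats 1000000 in
set_option synthInstance.maxHeartbeats 400000 in
lemma lemma1_key2 (t : B ⊗[F] Unitization F A) :
    (LinearMap.lTensor B (LinearMap.mul' F (Unitization F A)))
      ((TensorProduct.assoc F B (Unitization F A) (Unitization F A))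
        (t ⊗ₜ (1 : Unitization F A))) = t := by
  induction t with
  | zero => simp
  | tmul v a => simp [LinearMap.mul'_apply]
  | add x y hx hy =>
      rw [show (x + y) ⊗ₜ (1 : Unitization F A) = x ⊗ₜ 1 + y ⊗ₜ 1 from
        TensorProduct.add_tmul _ _ _]
      simp only [map_add, hx, hy]

end Lemma1Aux

/-- **Lemma 1.** Suppose `B` contains no nonzero element `b` with `dim_F bB < ∞`. Regard
`S(A,B)` inside `Lin(B, B ⊗_F Â)` (where `Â = Unitization F A` is the unital hull), and let
`L_b : x ↦ (bx) ⊗ 1`. Then (1) `L_B·S(A,B) + S(A,B)·L_B ⊆ S(A,B)`, and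
(2) `L_B ∩ S(A,B) = (0)`. -/
theorem lemma1_LB_SAB
    (F : Type*) [Field F]
    (A : Type*) [NonUnitalRing A] [Module F A] [SMulCommClass F A A] [IsScalarTower F A A]
    (B : Type*) [NonUnitalRing B] [Module F B] [SMulCommClass F B B] [IsScalarTower F B B]
    (hB : ∀ b : B, FiniteDimensional F (LinearMap.range (LinearMap.mulLeft F b)) → b = 0) :
    let Ahat := Unitization F A
    let SABhat : Set (B →ₗ[F] B ⊗[F] Ahat) :=
      (fun f => (LinearMap.lTensor B (Unitization.inrHom F F A)) ∘ₗ f) '' (SAB F A B)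
    let Lb : B → (B →ₗ[F] B ⊗[F] Ahat) :=
      fun b => ((TensorProduct.mk F B Ahat).flip 1) ∘ₗ LinearMap.mulLeft F b
    (∀ b : B, ∀ f ∈ SABhat,
        wrMul F Ahat B (Lb b) f ∈ SABhat ∧ wrMul F Ahat B f (Lb b) ∈ SABhat) ∧
    (∀ b : B, Lb b ∈ SABhat → b = 0) := by
  intro Ahat SABhat Lb
  constructor
  · rintro b f ⟨g, ⟨V, hV, hrange⟩, rfl⟩
    constructor
    · refine ⟨LinearMap.rTensor A (LinearMap.mulLeft F b) ∘ₗ g,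
        ⟨V.map (LinearMap.mulLeft F b), ?_, ?_⟩, ?_⟩
      · exact Module.Finite.map V (LinearMap.mulLeft F b)
      · rintro _ ⟨x, rfl⟩
        obtain ⟨t, ht⟩ := hrange ⟨x, rfl⟩
        set V' := V.map (LinearMap.mulLeft F b)
        have hmem : ∀ v : V, (LinearMap.mulLeft F b) (V.subtype v) ∈ V' :=
          fun v => ⟨v, v.2, rfl⟩
        set h : V →ₗ[F] V' := (LinearMap.mulLeft F b ∘ₗ V.subtype).codRestrict V' hmem
        refine ⟨LinearMap.rTensor A h t, ?_⟩
        have hcomp : V'.subtype ∘ₗ h = LinearMap.mulLeft F b ∘ₗ V.subtype := by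
          ext v; rfl
        calc (LinearMap.rTensor A V'.subtype) ((LinearMap.rTensor A h) t)
            = LinearMap.rTensor A (V'.subtype ∘ₗ h) t := by
              rw [LinearMap.rTensor_comp]; rfl
          _ = LinearMap.rTensor A (LinearMap.mulLeft F b)
                ((LinearMap.rTensor A V.subtype) t) := by
              rw [hcomp, LinearMap.rTensor_comp]; rfl
          _ = _ := by rw [ht]; rfl
      · symm
        exact congrArg (fun h => h ∘ₗ g) (lemma1_key1 F A B b)
    · refine ⟨g ∘ₗ LinearMap.mulLeft F b, ⟨V, hV, ?_⟩, ?_⟩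
      · rintro _ ⟨x, rfl⟩
        exact hrange ⟨LinearMap.mulLeft F b x, rfl⟩
      · apply LinearMap.ext
        intro x
        symm
        show (LinearMap.lTensor B (LinearMap.mul' F Ahat))
            ((TensorProduct.assoc F B Ahat Ahat)
              ((LinearMap.rTensor Ahat
                ((LinearMap.lTensor B (Unitization.inrHom F F A : A →ₗ[F] Ahat)) ∘ₗ g))
                ((b * x) ⊗ₜ (1 : Ahat)))) =
          (LinearMap.lTensor B (Unitization.inrHom F F A : A →ₗ[F] Ahat)) (g (b * x))
        rw [LinearMap.rTensor_tmul]
        exact lemma1_key2 F A B _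
  · rintro b ⟨g, hg, heq⟩
    have hfst : ∀ x : B,
        (TensorProduct.rid F B)
          ((LinearMap.lTensor B (Unitization.fstHom F A).toLinearMap)
            ((Lb b) x)) = b * x := by
      intro x
      show (TensorProduct.rid F B)
        ((LinearMap.lTensor B (Unitization.fstHom F A).toLinearMap)
          ((b * x) ⊗ₜ (1 : Ahat))) = b * x
      simp
    have hzero : (Unitization.fstHom F A).toLinearMap ∘ₗ
        (Unitization.inrHom F F A : A →ₗ[F] Ahat) = 0 := by
      ext a; simp
    have hbx : ∀ x : B, b * x = 0 := by
      intro x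
      have h1 := hfst x
      rw [← heq] at h1
      simp only [LinearMap.coe_comp, Function.comp_apply] at h1
      rw [← LinearMap.comp_apply (LinearMap.lTensor B (Unitization.fstHom F A).toLinearMap),
        ← LinearMap.lTensor_comp, hzero] at h1
      simpa using h1.symm
    apply hB
    have : LinearMap.range (LinearMap.mulLeft F b) = ⊥ := by
      rw [LinearMap.range_eq_bot]
      ext x; exact hbx x
    rw [this]
    infer_instance
end

section
/- Let R be a prime algebra with a nonzero left ideal L such that: (1) {ℓ ∈ L : Lℓ = 0} = (0); and (2) for every n ≥ 1, every a ∈ R, and all ℓ₁,…,ℓ_n ∈ L there exists ℓ' ∈ L with (a − ℓ')ℓ_i = 0 for 1 ≤ i ≤ n. Then R is a primitive algebra if and only if L (with its induced multiplication) is a primitive algebra. -/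
open TensorProduct

theorem endAddApply {M : Type*} [AddCommGroup M] (f g : AddMonoid.End M) (m : M) :
    (f + g) m = f m + g m := rfl

/-- **Lemma 2.** Let `R` be a prime algebra with a nonzero left ideal `L` such that:
(1) `{ℓ ∈ L : Lℓ = 0} = (0)`; and (2) for every `n ≥ 1`, every `a ∈ R`, and all
`ℓ₁, …, ℓ_n ∈ L` there exists `ℓ' ∈ L` with `(a − ℓ')ℓᵢ = 0` for `1 ≤ i ≤ n`. Then `R` is
primitive if and only if `L` (with its induced multiplication) is primitive. -/
theorem lemma2_primitive_iff_left_ideal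
    (F : Type u) [Field F] (R : Type v) [NonUnitalRing R] [Module F R]
    [SMulCommClass F R R] [IsScalarTower F R R]
    (hprime : IsPrimeIn (fun a b : R => a * b) (⊤ : AddSubgroup R))
    (L : AddSubgroup R) (hL0 : L ≠ ⊥)
    (hleft : ∀ r : R, ∀ l ∈ L, r * l ∈ L)
    (h1 : ∀ l ∈ L, (∀ l' ∈ L, l' * l = 0) → l = 0)
    (h2 : ∀ (n : ℕ) (a : R) (ℓ : Fin n → R), (∀ i, ℓ i ∈ L) →
      ∃ l' ∈ L, ∀ i, (a - l') * ℓ i = 0) :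
    IsPrimitiveIn (fun a b : R => a * b) (⊤ : AddSubgroup R) ↔
      IsPrimitiveIn (fun a b : R => a * b) L := by
  classical
  constructor
  · -- R primitive → L primitive
    rintro ⟨M, instM, ρ, hadd, hmul, hinj, ⟨x0, -, m0, hx0⟩, htrans⟩
    have endmul : ∀ (f g : AddMonoid.End M) (m : M), (f * g) m = f (g m) := fun _ _ _ => rfl
    have hadd' : ∀ x y : R, ρ (x + y) = ρ x + ρ y := fun x y =>
      hadd x (AddSubgroup.mem_top x) y (AddSubgroup.mem_top y)
    have hmul' : ∀ x y : R, ρ (x * y) = ρ x * ρ y := fun x y =>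
      hmul x (AddSubgroup.mem_top x) y (AddSubgroup.mem_top y)
    have hρ0 : ρ 0 = 0 := by
      have h := hadd' 0 0
      rw [add_zero] at h
      exact add_left_cancel (a := ρ 0) (by rw [← h, add_zero])
    have hker : ∀ a : R, ρ a = 0 → a = 0 := fun a h =>
      hinj (by simp) (by simp) (by rw [h, hρ0])
    set N : AddSubgroup M :=
      { carrier := {m | ∀ l ∈ L, ρ l m = 0}
        zero_mem' := fun l _ => map_zero (ρ l)
        add_mem' := fun ha hb l hl => by
          rw [map_add, ha l hl, hb l hl, add_zero]
        neg_mem' := fun ha l hl => by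
          rw [map_neg, ha l hl, neg_zero] } with hN
    have hmemN : ∀ m : M, m ∈ N ↔ ∀ l ∈ L, ρ l m = 0 := fun m => Iff.rfl
    have hstab : ∀ x ∈ L, N ≤ N.comap (ρ x) := by
      intro x hx m hm
      intro l hl
      have hlx : l * x ∈ L := hleft l x hx
      have : ρ (l * x) m = 0 := hm (l * x) hlx
      rw [hmul'] at this
      exact this
    set ρ' : R → AddMonoid.End (M ⧸ N) := fun x =>
      if hx : N ≤ N.comap (ρ x) then QuotientAddGroup.map N N (ρ x) hx else 0 with hρ'
    have hρ'eq : ∀ x ∈ L, ∀ m : M,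
        ρ' x (QuotientAddGroup.mk m) = QuotientAddGroup.mk (ρ x m) := by
      intro x hx m
      simp only [hρ']
      exact (congrArg (fun f : AddMonoid.End (M ⧸ N) => f (QuotientAddGroup.mk m))
        (dif_pos (hstab x hx) : ρ' x = QuotientAddGroup.map N N (ρ x) (hstab x hx))).trans rfl
    refine ⟨M ⧸ N, inferInstance, ρ', ?_, ?_, ?_, ?_, ?_⟩
    · intro x hx y hy
      have hxy : x + y ∈ L := L.add_mem hx hy
      refine DFunLike.ext _ _ fun mm => ?_
      induction mm using QuotientAddGroup.induction_on with
      | H m =>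
        show ρ' (x + y) (QuotientAddGroup.mk m) = ρ' x _ + ρ' y _
        rw [hρ'eq _ hxy, hρ'eq _ hx, hρ'eq _ hy, hadd']
        rfl
    · intro x hx y hy
      have hxy : x * y ∈ L := hleft x y hy
      refine DFunLike.ext _ _ fun mm => ?_
      induction mm using QuotientAddGroup.induction_on with
      | H m =>
        show ρ' (x * y) (QuotientAddGroup.mk m) = ρ' x (ρ' y (QuotientAddGroup.mk m))
        rw [hρ'eq _ hxy, hρ'eq _ hy, hρ'eq _ hx, hmul']
        rfl
    · intro x hx y hy hxy
      have hx' : x ∈ L := hx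
      have hy' : y ∈ L := hy
      have hsub : ∀ m : M, ρ (x - y) m ∈ N := by
        intro m
        have := DFunLike.congr_fun hxy (QuotientAddGroup.mk (s := N) m)
        rw [hρ'eq _ hx', hρ'eq _ hy'] at this
        have hmm : QuotientAddGroup.mk (s := N) (ρ x m - ρ y m) = 0 := by
          rw [QuotientAddGroup.mk_sub]
          rw [show (QuotientAddGroup.mk (s := N) ((ρ x) m)) = QuotientAddGroup.mk ((ρ y) m) from this]
          rw [sub_self]
        have hd : ρ x m - ρ y m ∈ N := (QuotientAddGroup.eq_zero_iff _).mp hmm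
        have heq : ρ (x - y) m = ρ x m - ρ y m := by
          have h := hadd' (x - y) y
          rw [sub_add_cancel] at h
          have h2' := DFunLike.congr_fun h m
          rw [endAddApply] at h2'
          exact eq_sub_of_add_eq h2'.symm
        rw [heq]; exact hd
      have hz : x - y = 0 := by
        apply h1 (x - y) (L.sub_mem hx' hy')
        intro l hl
        apply hker
        refine DFunLike.ext _ _ fun m => ?_
        rw [AddMonoid.End.zero_apply]
        have := hsub m
        have h0 : ρ l (ρ (x - y) m) = 0 := this l hl
        rw [← endmul, ← hmul'] at h0
        exact h0
      exact sub_eq_zero.mp hz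
    · -- nondegeneracy
      have hLL : ∃ l ∈ L, ∃ m : M, ρ l m ∉ N := by
        by_contra hcon
        push_neg at hcon
        apply hL0
        ext l
        simp only [AddSubgroup.mem_bot]
        constructor
        · intro hl
          apply h1 l hl
          intro l' hl'
          apply hker
          refine DFunLike.ext _ _ fun m => ?_
          rw [AddMonoid.End.zero_apply]
          have := hcon l hl m l' hl'
          rw [← endmul, ← hmul'] at this
          exact this
        · rintro rfl; exact L.zero_mem
      obtain ⟨l, hl, m, hm⟩ := hLL
      refine ⟨l, hl, QuotientAddGroup.mk m, ?_⟩
      rw [hρ'eq _ hl]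
      simpa [QuotientAddGroup.eq_zero_iff] using hm
    · -- transitivity
      intro mm hmm yy
      induction mm using QuotientAddGroup.induction_on with
      | H m =>
        induction yy using QuotientAddGroup.induction_on with
        | H y =>
          have hmN : m ∉ N := fun h => hmm (by simpa [QuotientAddGroup.eq_zero_iff] using h)
          obtain ⟨l0, hl0, hne⟩ : ∃ l0 ∈ L, ρ l0 m ≠ 0 := by
            by_contra hc; push_neg at hc; exact hmN (fun l hl => hc l hl)
          obtain ⟨r, -, hr⟩ := htrans (ρ l0 m) hne y
          refine ⟨r * l0, hleft r l0 hl0, ?_⟩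
          rw [hρ'eq _ (hleft r l0 hl0), hmul']
          show QuotientAddGroup.mk (ρ r (ρ l0 m)) = _
          rw [hr]
  · -- L primitive → R primitive
    rintro ⟨M, instM, ρ, hadd, hmul, hinj, ⟨x0, hx0L, m0, hx0⟩, htrans⟩
    have endmul : ∀ (f g : AddMonoid.End M) (m : M), (f * g) m = f (g m) := fun _ _ _ => rfl
    have hadd' : ∀ x ∈ L, ∀ y ∈ L, ρ (x + y) = ρ x + ρ y := hadd
    have hmul' : ∀ x ∈ L, ∀ y ∈ L, ρ (x * y) = ρ x * ρ y := hmul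
    have hρ0 : ρ 0 = 0 := by
      have h := hadd' 0 L.zero_mem 0 L.zero_mem
      rw [add_zero] at h
      exact add_left_cancel (a := ρ 0) (by rw [← h, add_zero])
    have hkerL : ∀ a ∈ L, ρ a = 0 → a = 0 := fun a ha h =>
      hinj ha L.zero_mem (by rw [h, hρ0])
    have hm0 : m0 ≠ 0 := fun h => hx0 (by rw [h, map_zero])
    -- choose representatives
    have lsel : ∀ m : M, ∃ l, l ∈ L ∧ ρ l m0 = m := by
      intro m
      obtain ⟨l, hl, he⟩ := htrans m0 hm0 m
      exact ⟨l, hl, he⟩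
    choose lm hlmL hlm using lsel
    have psel : ∀ a l : R, ∃ l', l' ∈ L ∧ (l ∈ L → (a - l') * l = 0) := by
      intro a l
      by_cases hl : l ∈ L
      · obtain ⟨l', hl', hz⟩ := h2 1 a (fun _ => l) (fun _ => hl)
        exact ⟨l', hl', fun _ => hz 0⟩
      · exact ⟨0, L.zero_mem, fun h => absurd h hl⟩
    choose ps hpsL hps using psel
    have ppair : ∀ a : R, ∀ l1 ∈ L, ∀ l2 ∈ L,
        ∃ l' ∈ L, (a - l') * l1 = 0 ∧ (a - l') * l2 = 0 := by
      intro a l1 hl1 l2 hl2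
      obtain ⟨l', hl', hz⟩ := h2 2 a ![l1, l2] (by
        intro i
        fin_cases i <;> simpa)
      exact ⟨l', hl', by simpa using hz 0, by simpa using hz 1⟩
    have key : ∀ (a l1 l1' l2 l2' : R), l1 ∈ L → l1' ∈ L → l2 ∈ L → l2' ∈ L →
        (a - l1') * l1 = 0 → (a - l2') * l2 = 0 → ρ l1 m0 = ρ l2 m0 →
        ρ (l1' * l1) m0 = ρ (l2' * l2) m0 := by
      intro a l1 l1' l2 l2' h1m h1'm h2m h2'm hz1 hz2 hrep
      obtain ⟨l', hl'L, hw1, hw2⟩ := ppair a l1 h1m l2 h2m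
      have e1 : l1' * l1 = l' * l1 := by
        have a1 : a * l1 = l1' * l1 := sub_eq_zero.mp (by rw [← sub_mul]; exact hz1)
        have a2 : a * l1 = l' * l1 := sub_eq_zero.mp (by rw [← sub_mul]; exact hw1)
        rw [← a1, a2]
      have e2 : l2' * l2 = l' * l2 := by
        have a1 : a * l2 = l2' * l2 := sub_eq_zero.mp (by rw [← sub_mul]; exact hz2)
        have a2 : a * l2 = l' * l2 := sub_eq_zero.mp (by rw [← sub_mul]; exact hw2)
        rw [← a1, a2]
      rw [e1, e2, hmul' l' hl'L l1 h1m, hmul' l' hl'L l2 h2m,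
        endmul, endmul, hrep]
    set act : R → M → M := fun a m => ρ (ps a (lm m) * lm m) m0 with hactdef
    have hact_eq : ∀ (a : R) (m : M) (l l' : R), l ∈ L → l' ∈ L → ρ l m0 = m →
        (a - l') * l = 0 → act a m = ρ (l' * l) m0 := by
      intro a m l l' hl hl' hrep hz
      exact key a (lm m) (ps a (lm m)) l l' (hlmL m) (hpsL a (lm m)) hl hl'
        (hps a (lm m) (hlmL m)) hz (by rw [hlm, hrep])
    have hext : ∀ l ∈ L, ∀ m : M, act l m = ρ l m := by
      intro l hl m
      rw [hact_eq l m (lm m) l (hlmL m) hl (hlm m) (by rw [sub_self, zero_mul]),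
        hmul' l hl (lm m) (hlmL m), endmul, hlm]
    have hA : ∀ (x y : R) (m : M), act (x + y) m = act x m + act y m := by
      intro x y m
      set l := lm m with hldef
      have hlL : l ∈ L := hlmL m
      have hx' := hps x l hlL
      have hy' := hps y l hlL
      have hz : (x + y - (ps x l + ps y l)) * l = 0 := by
        have : x + y - (ps x l + ps y l) = (x - ps x l) + (y - ps y l) := by abel
        rw [this, add_mul, hx', hy', add_zero]
      have hsumL : ps x l + ps y l ∈ L := L.add_mem (hpsL x l) (hpsL y l)
      rw [hact_eq (x + y) m l (ps x l + ps y l) hlL hsumL (hlm m) hz,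
        hact_eq x m l (ps x l) hlL (hpsL x l) (hlm m) hx',
        hact_eq y m l (ps y l) hlL (hpsL y l) (hlm m) hy',
        add_mul, hadd' (ps x l * l) (hleft _ l hlL) (ps y l * l) (hleft _ l hlL),
        endAddApply]
    have hMul : ∀ (x y : R) (m : M), act (x * y) m = act x (act y m) := by
      intro x y m
      set l := lm m with hldef
      have hlL : l ∈ L := hlmL m
      have hy' := hps y l hlL
      have hyl : ps y l * l ∈ L := hleft _ l hlL
      have hactym : act y m = ρ (ps y l * l) m0 :=
        hact_eq y m l (ps y l) hlL (hpsL y l) (hlm m) hy'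
      have hx' := hps x (ps y l * l) hyl
      have hpx : ps x (ps y l * l) ∈ L := hpsL x _
      have hzz : (x * y - ps x (ps y l * l) * ps y l) * l = 0 := by
        have ayl : y * l = ps y l * l := sub_eq_zero.mp (by rw [← sub_mul]; exact hy')
        have axyl : x * (ps y l * l) = ps x (ps y l * l) * (ps y l * l) :=
          sub_eq_zero.mp (by rw [← sub_mul]; exact hx')
        rw [sub_mul, mul_assoc, ayl, axyl, mul_assoc, sub_self]
      have hpp : ps x (ps y l * l) * ps y l ∈ L := hleft _ _ (hpsL y l)
      rw [hact_eq (x * y) m l (ps x (ps y l * l) * ps y l) hlL hpp (hlm m) hzz,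
        hact_eq x (act y m) (ps y l * l) (ps x (ps y l * l)) hyl hpx hactym.symm hx',
        mul_assoc]
    have hact0 : ∀ a : R, act a 0 = 0 := by
      intro a
      show ρ (ps a (lm 0) * lm 0) m0 = 0
      rw [hmul' _ (hpsL a (lm 0)) _ (hlmL 0), endmul, hlm, map_zero]
    have hAm : ∀ (a : R) (m n : M), act a (m + n) = act a m + act a n := by
      intro a m n
      have hl1 : lm m ∈ L := hlmL m
      have hl2 : lm n ∈ L := hlmL n
      obtain ⟨l', hl'L, hz1, hz2⟩ := ppair a (lm m) hl1 (lm n) hl2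
      have hsum : lm m + lm n ∈ L := L.add_mem hl1 hl2
      have hrep : ρ (lm m + lm n) m0 = m + n := by
        rw [hadd' _ hl1 _ hl2, endAddApply, hlm, hlm]
      have hz : (a - l') * (lm m + lm n) = 0 := by
        rw [mul_add, hz1, hz2, add_zero]
      rw [hact_eq a (m + n) (lm m + lm n) l' hsum hl'L hrep hz,
        hact_eq a m (lm m) l' hl1 hl'L (hlm m) hz1,
        hact_eq a n (lm n) l' hl2 hl'L (hlm n) hz2,
        mul_add, hadd' _ (hleft l' _ hl1) _ (hleft l' _ hl2), endAddApply]
    set σ : R → AddMonoid.End M := fun a => AddMonoidHom.mk' (act a) (hAm a) with hσdef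
    have hσapp : ∀ (a : R) (m : M), σ a m = act a m := fun a m => rfl
    have hact0' : ∀ m : M, act 0 m = 0 := by
      intro m
      rw [hext 0 L.zero_mem m, hρ0]; rfl
    have hAneg : ∀ (x : R) (m : M), act (-x) m = - act x m := by
      intro x m
      have h := hA x (-x) m
      rw [add_neg_cancel, hact0'] at h
      exact eq_neg_of_add_eq_zero_right h.symm
    set I : AddSubgroup R :=
      { carrier := {a | ∀ m : M, act a m = 0}
        zero_mem' := hact0'
        add_mem' := fun ha hb m => by rw [hA, ha m, hb m, add_zero]
        neg_mem' := fun ha m => by rw [hAneg, ha m, neg_zero] } with hI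
    have hmemI : ∀ a : R, a ∈ I ↔ ∀ m : M, act a m = 0 := fun a => Iff.rfl
    have hIL : ∀ a ∈ I, ∀ l ∈ L, a * l = 0 := by
      intro a ha l hl
      have h1' : a * l ∈ I := by
        intro m
        rw [hMul, ha (act l m)]
      have h2' : a * l ∈ L := hleft a l hl
      apply hkerL _ h2'
      refine DFunLike.ext _ _ fun m => ?_
      rw [AddMonoid.End.zero_apply]
      have := h1' m
      rw [hext _ h2' m] at this
      exact this
    set J : AddSubgroup R :=
      AddSubgroup.closure ((L : Set R) ∪ {x | ∃ l ∈ L, ∃ r : R, x = l * r}) with hJ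
    have hLJ : (L : Set R) ⊆ (J : Set R) :=
      subset_trans Set.subset_union_left AddSubgroup.subset_closure
    have hIideal : IsIdealIn (fun a b : R => a * b) (⊤ : AddSubgroup R) I := by
      refine ⟨le_top, ?_⟩
      intro x _ y hy
      constructor
      · intro m; show act (x * y) m = 0
        rw [hMul, hy m, hact0]
      · intro m; show act (y * x) m = 0
        rw [hMul, hy (act x m)]
    have hJideal : IsIdealIn (fun a b : R => a * b) (⊤ : AddSubgroup R) J := by
      refine ⟨le_top, ?_⟩
      intro x _ y hy
      constructor
      · show x * y ∈ J
        induction hy using AddSubgroup.closure_induction with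
        | mem z hz =>
          rcases hz with hz | ⟨l, hl, r, rfl⟩
          · exact AddSubgroup.subset_closure (Or.inl (hleft x z hz))
          · rw [← mul_assoc]
            exact AddSubgroup.subset_closure (Or.inr ⟨x * l, hleft x l hl, r, rfl⟩)
        | zero => exact (by rw [mul_zero]; exact J.zero_mem)
        | add a b _ _ ha hb => rw [mul_add]; exact J.add_mem ha hb
        | neg a _ ha => rw [mul_neg]; exact J.neg_mem ha
      · show y * x ∈ J
        induction hy using AddSubgroup.closure_induction with
        | mem z hz =>
          rcases hz with hz | ⟨l, hl, r, rfl⟩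
          · exact AddSubgroup.subset_closure (Or.inr ⟨z, hz, x, rfl⟩)
          · rw [mul_assoc]
            exact AddSubgroup.subset_closure (Or.inr ⟨l, hl, r * x, rfl⟩)
        | zero => exact (by rw [zero_mul]; exact J.zero_mem)
        | add a b _ _ ha hb => rw [add_mul]; exact J.add_mem ha hb
        | neg a _ ha => rw [neg_mul]; exact J.neg_mem ha
    have hprod : ∀ a ∈ I, ∀ b ∈ J, a * b = 0 := by
      intro a ha b hb
      induction hb using AddSubgroup.closure_induction with
      | mem z hz =>
        rcases hz with hz | ⟨l, hl, r, rfl⟩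
        · exact hIL a ha z hz
        · rw [← mul_assoc, hIL a ha l hl, zero_mul]
      | zero => rw [mul_zero]
      | add u v _ _ hu hv => rw [mul_add, hu, hv, add_zero]
      | neg u _ hu => rw [mul_neg, hu, neg_zero]
    have hIbot : I = ⊥ := by
      rcases hprime I J hIideal hJideal hprod with h | h
      · exact h
      · exfalso
        apply hL0
        rw [eq_bot_iff]
        intro l hl
        have : l ∈ J := hLJ hl
        rw [h] at this
        exact this
    refine ⟨M, instM, σ, ?_, ?_, ?_, ?_, ?_⟩
    · intro x _ y _
      refine DFunLike.ext _ _ fun m => ?_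
      show act (x + y) m = act x m + act y m
      exact hA x y m
    · intro x _ y _
      refine DFunLike.ext _ _ fun m => ?_
      show act (x * y) m = act x (act y m)
      exact hMul x y m
    · intro x _ y _ hxy
      have hsub : x - y ∈ I := by
        intro m
        have := DFunLike.congr_fun hxy m
        have hxy' : act x m = act y m := this
        have hs : act (x - y) m + act y m = act x m := by
          rw [← hA, sub_add_cancel]
        rw [hxy'] at hs
        exact add_right_cancel (b := act y m) (by rw [hs, zero_add])
      have : x - y ∈ (⊥ : AddSubgroup R) := hIbot ▸ hsub
      rw [AddSubgroup.mem_bot] at this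
      exact sub_eq_zero.mp this
    · exact ⟨x0, AddSubgroup.mem_top x0, m0, by rw [hσapp, hext x0 hx0L]; exact hx0⟩
    · intro m hm y
      obtain ⟨l, hl, he⟩ := htrans m hm y
      exact ⟨l, AddSubgroup.mem_top l, by rw [hσapp, hext l hl]; exact he⟩
end

section
/- Let F be an infinite field and let B be an associative F-algebra such that {b ∈ B : bB = 0} = (0) and ⋂_{s≥1} B^s = (0). Then for arbitrary linearly independent elements b₁,…,b_n ∈ B and arbitrary s ≥ 1 there exists an element b ∈ B^s such that b₁b,…,b_nb are linearly independent over F. -/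
open TensorProduct

section Lemma11Aux
set_option linter.unusedSectionVars false

open Polynomial

variable {F : Type*} [Field F]
variable {B : Type*} [NonUnitalRing B] [Module F B] [SMulCommClass F B B] [IsScalarTower F B B]

private lemma word_len_pos {mul : B → B → B} {st : Set B} {k : ℕ} {x : B}
    (h : IsWord mul st k x) : 1 ≤ k := by
  induction h with
  | base _ => exact le_refl 1
  | mul _ _ ih1 ih2 => omega

private lemma word_univ_one (x : B) : IsWord (· * ·) (Set.univ : Set B) 1 x :=
  IsWord.base (Set.mem_univ x)

private lemma word_pred {k : ℕ} {x : B} (h : IsWord (· * ·) (Set.univ : Set B) k x) :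
    2 ≤ k → IsWord (· * ·) (Set.univ : Set B) (k - 1) x := by
  induction h with
  | base _ => intro hk; exact absurd hk (by norm_num)
  | @mul m n u v hu hv ihu ihv =>
    intro _
    have hm := word_len_pos hu
    have hn := word_len_pos hv
    rcases Nat.lt_or_ge m 2 with h2 | h2
    · rcases Nat.lt_or_ge n 2 with h3 | h3
      · have he : m + n - 1 = 1 := by omega
        rw [he]
        exact word_univ_one _
      · have h4 := IsWord.mul hu (ihv h3)
        have he : m + (n - 1) = m + n - 1 := by omega
        rw [he] at h4; exact h4
    · have h4 := IsWord.mul (ihu h2) hv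
      have he : m - 1 + n = m + n - 1 := by omega
      rw [he] at h4; exact h4

private lemma word_split {k : ℕ} {x : B} (h : IsWord (· * ·) (Set.univ : Set B) k x) :
    2 ≤ k → ∃ y z : B, IsWord (· * ·) (Set.univ : Set B) (k - 1) y ∧ x = y * z := by
  induction h with
  | base _ => intro hk; exact absurd hk (by norm_num)
  | @mul m n u v hu hv ihu ihv =>
    intro _
    have hm := word_len_pos hu
    have hn := word_len_pos hv
    rcases Nat.lt_or_ge n 2 with h3 | h3
    · have hn1 : n = 1 := by omega
      refine ⟨u, v, ?_, rfl⟩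
      have he : m + n - 1 = m := by omega
      rw [he]; exact hu
    · obtain ⟨y, z, hy, hv'⟩ := ihv h3
      refine ⟨u * y, z, ?_, ?_⟩
      · have h4 := IsWord.mul hu hy
        have he : m + (n - 1) = m + n - 1 := by omega
        rw [he] at h4; exact h4
      · show u * v = u * y * z
        rw [hv', mul_assoc]

/-- `B^s` as a submodule. -/
private def Bspan (F : Type*) [Field F] (B : Type*) [NonUnitalRing B] [Module F B]
    (s : ℕ) : Submodule F B :=
  Submodule.span F {x : B | IsWord (· * ·) (Set.univ : Set B) s x}

private lemma Bspan_succ_le (s : ℕ) (hs : 1 ≤ s) : Bspan F B (s + 1) ≤ Bspan F B s := by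
  rw [Bspan, Submodule.span_le]
  intro x hx
  have h := word_pred hx (by omega)
  exact Submodule.subset_span h

private lemma Bspan_le_of_le {m t : ℕ} (hm : 1 ≤ m) (hmt : m ≤ t) :
    Bspan F B t ≤ Bspan F B m := by
  induction t, hmt using Nat.le_induction with
  | base => exact le_refl _
  | succ t ht ih => exact le_trans (Bspan_succ_le t (by omega)) ih

private lemma mul_mem_Bspan_left {m : ℕ} (x : B) {c : B} (hc : c ∈ Bspan F B m) :
    x * c ∈ Bspan F B (m + 1) := by
  have hmap : Submodule.map (LinearMap.mulLeft F x) (Bspan F B m) ≤ Bspan F B (m + 1) := by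
    rw [Bspan, Submodule.map_span, Submodule.span_le]
    rintro _ ⟨w, hw, rfl⟩
    have h := IsWord.mul (word_univ_one x) hw
    rw [Nat.add_comm 1 m] at h
    exact Submodule.subset_span h
  exact hmap ⟨c, hc, by simp⟩

private lemma mul_mem_Bspan_right {m : ℕ} {c : B} (hc : c ∈ Bspan F B m) (z : B) :
    c * z ∈ Bspan F B (m + 1) := by
  have hmap : Submodule.map (LinearMap.mulRight F z) (Bspan F B m) ≤ Bspan F B (m + 1) := by
    rw [Bspan, Submodule.map_span, Submodule.span_le]
    rintro _ ⟨w, hw, rfl⟩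
    have h := IsWord.mul hw (word_univ_one z)
    exact Submodule.subset_span h
  exact hmap ⟨c, hc, by simp⟩

/-- If `d · B^s = 0` for some `s ≥ 1` and `B` has zero left annihilator, then `d = 0`. -/
private lemma lemA (h1 : ∀ b : B, (∀ x : B, b * x = 0) → b = 0) :
    ∀ s : ℕ, 1 ≤ s → ∀ d : B, (∀ c ∈ Bspan F B s, d * c = 0) → d = 0 := by
  intro s hs
  induction s, hs using Nat.le_induction with
  | base =>
    intro d hd
    exact h1 d fun x => hd x (Submodule.subset_span (word_univ_one x))
  | succ s hs ih =>
    intro d hd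
    refine h1 d fun x => ih (d * x) fun c hc => ?_
    rw [mul_assoc]
    exact hd (x * c) (mul_mem_Bspan_left x hc)

/-- Vanishing lemma: a `B`-valued polynomial expression vanishing on an infinite set has
vanishing "constant term". -/
private lemma vanish {ι : Type} [Fintype ι] (p : ι → Polynomial F) (v : ι → B)
    {S : Set F} (hS : S.Infinite)
    (h : ∀ ξ ∈ S, ∑ l, (p l).eval ξ • v l = 0) :
    ∑ l, (p l).coeff 0 • v l = 0 := by
  rw [← Module.forall_dual_apply_eq_zero_iff F]
  intro f
  have hP : (∑ l, Polynomial.C (f (v l)) * p l) = 0 := by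
    apply Polynomial.eq_zero_of_infinite_isRoot
    apply Set.Infinite.mono ?_ hS
    intro ξ hξ
    have := h ξ hξ
    simp only [Set.mem_setOf_eq, Polynomial.IsRoot, Polynomial.eval_finset_sum,
      Polynomial.eval_mul, Polynomial.eval_C]
    calc (∑ l, f (v l) * (p l).eval ξ) = f (∑ l, (p l).eval ξ • v l) := by
          rw [map_sum]; congr 1; funext l; rw [map_smul, smul_eq_mul, mul_comm]
      _ = 0 := by rw [this, map_zero]
  have h0 := congrArg (fun q => Polynomial.coeff q 0) hP
  simp only [Polynomial.finset_sum_coeff, Polynomial.coeff_C_mul, Polynomial.coeff_zero] at h0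
  rw [map_sum]
  calc (∑ l, f ((p l).coeff 0 • v l)) = ∑ l, f (v l) * (p l).coeff 0 := by
        congr 1; funext l; rw [map_smul, smul_eq_mul, mul_comm]
    _ = 0 := h0


/-- Final phase: if `d · B^s` lands in a finite-dimensional subspace `W`, then `d = 0`. -/
private lemma finishV (h1 : ∀ b : B, (∀ x : B, b * x = 0) → b = 0)
    (h2 : ∀ b : B, (∀ m : ℕ, 1 ≤ m → b ∈ Bspan F B m) → b = 0)
    {s : ℕ} (hs : 1 ≤ s) {d : B} (W : Submodule F B) (hWfd : FiniteDimensional F W)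
    (hdW : ∀ c ∈ Bspan F B s, d * c ∈ W) : d = 0 := by
  set V : ℕ → Submodule F B := fun t => Submodule.map (LinearMap.mulLeft F d) (Bspan F B (s + t))
    with hV
  have hVle : ∀ t, V t ≤ W := by
    intro t
    rintro v ⟨c, hc, rfl⟩
    simp only [LinearMap.mulLeft_apply]
    exact hdW c (Bspan_le_of_le hs (by omega) hc)
  have hVfd : ∀ t, FiniteDimensional F (V t) := fun t =>
    Submodule.finiteDimensional_of_le (hVle t)
  have hVmono : ∀ t, V (t + 1) ≤ V t := by
    intro t
    apply Submodule.map_mono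
    show Bspan F B (s + t + 1) ≤ Bspan F B (s + t)
    exact Bspan_succ_le _ (by omega)
  have hVstep : ∀ t, V (t + 1) =
      Submodule.span F {v : B | ∃ u ∈ V t, ∃ z : B, v = u * z} := by
    intro t
    apply le_antisymm
    · show Submodule.map (LinearMap.mulLeft F d) (Bspan F B (s + t + 1)) ≤ _
      rw [Bspan, Submodule.map_span, Submodule.span_le]
      rintro _ ⟨x, hx, rfl⟩
      obtain ⟨y, z, hy, rfl⟩ := word_split hx (by omega)
      have h5 : s + t + 1 - 1 = s + t := by omega
      rw [h5] at hy
      have hdy : d * y ∈ V t := ⟨y, Submodule.subset_span hy, rfl⟩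
      have he : LinearMap.mulLeft F d (y * z) = (d * y) * z := by
        simp [mul_assoc]
      rw [he]
      exact Submodule.subset_span ⟨d * y, hdy, z, rfl⟩
    · rw [Submodule.span_le]
      rintro _ ⟨u, hu, z, rfl⟩
      obtain ⟨c, hc, rfl⟩ := hu
      simp only [LinearMap.mulLeft_apply]
      refine ⟨c * z, mul_mem_Bspan_right hc z, ?_⟩
      simp [mul_assoc]
  have hfr : ∀ t, Module.finrank F (V (t + 1)) ≤ Module.finrank F (V t) := by
    intro t
    haveI := hVfd t
    exact LinearMap.finrank_le_finrank_of_injective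
      (f := Submodule.inclusion (hVmono t)) (Submodule.inclusion_injective _)
  have hstab : ∃ t, V (t + 1) = V t := by
    by_contra hne
    push_neg at hne
    have hlt : ∀ t, Module.finrank F (V (t + 1)) < Module.finrank F (V t) := by
      intro t
      rcases lt_or_eq_of_le (hfr t) with h | h
      · exact h
      · exfalso
        haveI := hVfd t
        exact hne t (Submodule.eq_of_le_of_finrank_le (hVmono t) (le_of_eq h.symm))
    have hgen : ∀ t, Module.finrank F (V t) + t ≤ Module.finrank F (V 0) := by
      intro t
      induction t with
      | zero => omega
      | succ t ih => have := hlt t; omega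
    have := hgen (Module.finrank F (V 0) + 1)
    omega
  obtain ⟨t₀, ht₀⟩ := hstab
  have hconst : ∀ j, V (t₀ + j) = V t₀ := by
    intro j
    induction j with
    | zero => rfl
    | succ j ih =>
      have he : V (t₀ + j + 1) = V (t₀ + 1) := by rw [hVstep, hVstep, ih]
      rw [show t₀ + (j + 1) = t₀ + j + 1 from rfl, he, ht₀]
  have hVbot : V t₀ = ⊥ := by
    rw [Submodule.eq_bot_iff]
    intro v hv
    apply h2 v
    intro m hm
    have hv' : v ∈ V (t₀ + m) := by rw [hconst m]; exact hv
    obtain ⟨c, hc, rfl⟩ := hv'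
    simp only [LinearMap.mulLeft_apply]
    have hmem : d * c ∈ Bspan F B (s + (t₀ + m) + 1) := mul_mem_Bspan_left d hc
    exact Bspan_le_of_le hm (by omega) hmem
  have hdown : ∀ t, V (t + 1) = ⊥ → V t = ⊥ := by
    intro t ht
    rw [Submodule.eq_bot_iff]
    intro v hv
    apply h1 v
    intro z
    have hmem : v * z ∈ V (t + 1) := by
      rw [hVstep t]
      exact Submodule.subset_span ⟨v, hv, z, rfl⟩
    rw [ht] at hmem
    simpa using hmem
  have hV0 : V 0 = ⊥ := by
    have hk : ∀ k, V (t₀ - k) = ⊥ := by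
      intro k
      induction k with
      | zero => simpa using hVbot
      | succ k ih =>
        rcases Nat.lt_or_ge t₀ (k + 1) with h | h
        · have he : t₀ - (k + 1) = t₀ - k := by omega
          rw [he]; exact ih
        · apply hdown
          have he : t₀ - (k + 1) + 1 = t₀ - k := by omega
          rw [he]; exact ih
    have := hk t₀
    simpa using this
  apply lemA (F := F) h1 s hs d
  intro c hc
  have hm : d * c ∈ V 0 := ⟨c, by simpa using hc, by simp⟩
  rw [hV0] at hm
  simpa using hm


set_option maxHeartbeats 2000000 in
/-- Key step: if `c₀` minimizes `dim ker(·c)` over `c ∈ C` and `Ψ δ · c₀ = 0`, then all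
`Ψ δ · c'`, `c' ∈ C`, lie in a fixed finite-dimensional subspace. -/
private lemma keyW [Infinite F] {n : ℕ} (Ψ : (Fin n → F) →ₗ[F] B)
    (C : Submodule F B) (c₀ : B) (hc₀ : c₀ ∈ C)
    (hmin : ∀ c ∈ C, Module.finrank F (LinearMap.ker ((LinearMap.mulRight F c₀) ∘ₗ Ψ)) ≤
      Module.finrank F (LinearMap.ker ((LinearMap.mulRight F c) ∘ₗ Ψ)))
    {δ : Fin n → F} (hδ : Ψ δ * c₀ = 0) :
    ∃ W : Submodule F B, FiniteDimensional F W ∧ ∀ c' ∈ C, Ψ δ * c' ∈ W := by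
  classical
  have hKmem : ∀ (c : B) (g : Fin n → F),
      g ∈ LinearMap.ker ((LinearMap.mulRight F c) ∘ₗ Ψ) ↔ Ψ g * c = 0 := by
    intro c g; simp [LinearMap.mem_ker]
  set L : Submodule F (Fin n → F) := LinearMap.ker ((LinearMap.mulRight F c₀) ∘ₗ Ψ) with hL
  have hδmem : δ ∈ L := (hKmem c₀ δ).mpr hδ
  obtain ⟨E, hLE⟩ := Submodule.exists_isCompl L
  set f₀ : E →ₗ[F] B := (LinearMap.mulRight F c₀) ∘ₗ Ψ ∘ₗ E.subtype with hf₀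
  have hf₀apply : ∀ e : E, f₀ e = Ψ (e : Fin n → F) * c₀ := by
    intro e; simp [hf₀]
  have hf₀inj : Function.Injective f₀ := by
    intro e e' hee
    have hsub : ((e : Fin n → F) - (e' : Fin n → F)) ∈ L := by
      rw [hL, hKmem, map_sub, sub_mul]
      rw [← hf₀apply, ← hf₀apply, hee, sub_self]
    have hmE : ((e : Fin n → F) - (e' : Fin n → F)) ∈ E := E.sub_mem e.2 e'.2
    have h0 := Submodule.disjoint_def.mp hLE.disjoint _ hsub hmE
    exact Subtype.ext (sub_eq_zero.mp h0)
  set W : Submodule F B := LinearMap.range f₀ with hW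
  haveI hWfd : FiniteDimensional F W := inferInstance
  refine ⟨W, hWfd, ?_⟩
  intro c' hc'
  obtain ⟨W', hWc⟩ := Submodule.exists_isCompl W
  set T : B →ₗ[F] W := Submodule.projectionOnto W W' hWc with hT
  have hTW : ∀ (x : B) (hx : x ∈ W), T x = ⟨x, hx⟩ := by
    intro x hx
    exact Submodule.projectionOnto_apply_left hWc ⟨x, hx⟩
  set gm : B → (E →ₗ[F] W) := fun c => T ∘ₗ (LinearMap.mulRight F c) ∘ₗ Ψ ∘ₗ E.subtype with hgm
  have hgmapply : ∀ (c : B) (e : E), gm c e = T (Ψ (e : Fin n → F) * c) := by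
    intro c e; simp [hgm]
  set r : ℕ := Module.finrank F E with hr
  set βE : Module.Basis (Fin r) F E := Module.finBasis F E with hβE
  set ε : E ≃ₗ[F] W := LinearEquiv.ofInjective f₀ hf₀inj with hε
  set βW : Module.Basis (Fin r) F W := βE.map ε with hβW
  have hgm0 : gm c₀ = ε.toLinearMap := by
    apply LinearMap.ext
    intro e
    have ha : gm c₀ e = T (f₀ e) := by rw [hgmapply, hf₀apply]
    have hb : T (f₀ e) = ⟨f₀ e, LinearMap.mem_range_self f₀ e⟩ := hTW _ _
    rw [ha, hb]
    apply Subtype.ext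
    exact (LinearEquiv.ofInjective_apply f₀ e).symm
  have hAm0 : LinearMap.toMatrix βE βW (gm c₀) = 1 := by
    rw [hgm0]
    ext i j
    rw [LinearMap.toMatrix_apply]
    have hεβ : ε.toLinearMap (βE j) = βW j := by rw [hβW, Module.Basis.map_apply]; rfl
    rw [hεβ, Module.Basis.repr_self]
    simp [Matrix.one_apply, Finsupp.single_apply, eq_comm]
  have hgmadd : ∀ ξ : F, gm (c₀ + ξ • c') = gm c₀ + ξ • gm c' := by
    intro ξ
    apply LinearMap.ext
    intro e
    simp only [hgmapply, LinearMap.add_apply, LinearMap.smul_apply]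
    rw [mul_add, mul_smul_comm, map_add, map_smul]
  set A' : Matrix (Fin r) (Fin r) F := LinearMap.toMatrix βE βW (gm c') with hA'
  set Mp : Matrix (Fin r) (Fin r) (Polynomial F) :=
    (1 : Matrix (Fin r) (Fin r) (Polynomial F)) + (Polynomial.X : Polynomial F) • A'.map Polynomial.C with hMp
  have hMpmap : ∀ ξ : F, Mp.map (Polynomial.eval ξ) = 1 + ξ • A' := by
    intro ξ
    ext i j
    simp [hMp, Matrix.map_apply, Matrix.add_apply, Matrix.smul_apply, Matrix.one_apply, apply_ite]
    try ring
  set Q : Polynomial F := Mp.det with hQ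
  have hQeval : ∀ ξ : F, Q.eval ξ = (1 + ξ • A').det := by
    intro ξ
    have h := RingHom.map_det (Polynomial.evalRingHom ξ) Mp
    have h2 : (Polynomial.evalRingHom ξ).mapMatrix Mp = 1 + ξ • A' := by
      rw [RingHom.mapMatrix_apply]
      exact hMpmap ξ
    rw [h2] at h
    exact h
  have hQ0 : Q.coeff 0 = 1 := by
    rw [Polynomial.coeff_zero_eq_eval_zero, hQeval]
    simp
  have hQne : Q ≠ 0 := fun h => by simp [h] at hQ0
  set w : Fin r → F := fun i => βW.repr (T (Ψ δ * c')) i with hw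
  set up : Fin r → Polynomial F :=
    fun i => (Mp.adjugate.mulVec fun j => Polynomial.C (w j)) i with hup
  have hupeval : ∀ (ξ : F) (i : Fin r),
      (up i).eval ξ = (((1 + ξ • A').adjugate).mulVec w) i := by
    intro ξ i
    have hadj : Mp.adjugate.map (Polynomial.eval ξ) = (1 + ξ • A').adjugate := by
      have h := RingHom.map_adjugate (Polynomial.evalRingHom ξ) Mp
      rw [RingHom.mapMatrix_apply, RingHom.mapMatrix_apply] at h
      rw [show Mp.adjugate.map (Polynomial.eval ξ) = Mp.adjugate.map (Polynomial.evalRingHom ξ) from rfl, h,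
        show Mp.map (Polynomial.evalRingHom ξ) = Mp.map (Polynomial.eval ξ) from rfl, hMpmap]
    calc (up i).eval ξ = ∑ j, (Mp.adjugate i j).eval ξ * w j := by
          simp [hup, Matrix.mulVec, dotProduct, Polynomial.eval_finset_sum]
      _ = _ := by
          rw [← hadj]
          simp [Matrix.mulVec, dotProduct, Matrix.map_apply]
  have hup0 : ∀ i, (up i).coeff 0 = w i := by
    intro i
    rw [Polynomial.coeff_zero_eq_eval_zero, hupeval]
    simp
  clear_value βW ε βE gm T
  set χ : (Fin r → F) →ₗ[F] B :=
    Ψ ∘ₗ E.subtype ∘ₗ (βE.equivFun.symm : (Fin r → F) ≃ₗ[F] E).toLinearMap with hχ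
  set S₀ : Set F := {ξ : F | ξ ≠ 0 ∧ Q.eval ξ ≠ 0} with hS₀
  have hS₀inf : S₀.Infinite := by
    have hfin : ({(0 : F)} ∪ {ξ : F | Q.IsRoot ξ}).Finite :=
      (Set.finite_singleton 0).union (Polynomial.finite_setOf_isRoot hQne)
    have he : S₀ = ({(0 : F)} ∪ {ξ : F | Q.IsRoot ξ})ᶜ := by
      ext ξ
      simp [hS₀, Polynomial.IsRoot, not_or]
    rw [he]
    exact hfin.infinite_compl
  have main : ∀ ξ ∈ S₀,
      Q.eval ξ • (Ψ δ * c') - χ (((1 + ξ • A').adjugate).mulVec w) * c₀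
        - ξ • (χ (((1 + ξ • A').adjugate).mulVec w) * c') = 0 := by
    intro ξ hξ
    obtain ⟨hξ0, hQξ⟩ := hξ
    have hcm : c₀ + ξ • c' ∈ C := C.add_mem hc₀ (C.smul_mem ξ hc')
    have hdet : (1 + ξ • A').det ≠ 0 := by rw [← hQeval]; exact hQξ
    have hMat : LinearMap.toMatrix βE βW (gm (c₀ + ξ • c')) = 1 + ξ • A' := by
      rw [hgmadd ξ, map_add, map_smul, hAm0]
    have hvec0 : ∀ xv : Fin r → F, (1 + ξ • A').mulVec xv = 0 → xv = 0 := by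
      intro xv hxv
      have hv2 : (1 + ξ • A').adjugate.mulVec ((1 + ξ • A').mulVec xv) = 0 := by
        rw [hxv, Matrix.mulVec_zero]
      rw [Matrix.mulVec_mulVec, Matrix.adjugate_mul, Matrix.smul_mulVec,
        Matrix.one_mulVec] at hv2
      exact (smul_eq_zero.mp hv2).resolve_left hdet
    have hEinj : ∀ e : E, Ψ (e : Fin n → F) * (c₀ + ξ • c') = 0 → e = 0 := by
      intro e he
      have hg0 : gm (c₀ + ξ • c') e = 0 := by rw [hgmapply, he, map_zero]
      have hmv := LinearMap.toMatrix_mulVec_repr βE βW (gm (c₀ + ξ • c')) e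
      rw [hMat, hg0, map_zero] at hmv
      have hz : (βE.repr e : Fin r → F) = 0 := hvec0 _ (by simpa using hmv)
      have hz2 : βE.repr e = 0 := by
        ext i
        exact congrFun hz i
      simpa using congrArg βE.repr.symm hz2
    have hKdim : Module.finrank F L ≤
        Module.finrank F (LinearMap.ker ((LinearMap.mulRight F (c₀ + ξ • c')) ∘ₗ Ψ)) :=
      hmin _ hcm
    set Kξ : Submodule F (Fin n → F) :=
      LinearMap.ker ((LinearMap.mulRight F (c₀ + ξ • c')) ∘ₗ Ψ) with hKξ
    set π : (Fin n → F) →ₗ[F] L := Submodule.projectionOnto L E hLE with hπ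
    set ρ : Kξ →ₗ[F] L := π ∘ₗ Kξ.subtype with hρ
    have hρinj : Function.Injective ρ := by
      intro u u' huu
      have hπsub : π ((u : Fin n → F) - (u' : Fin n → F)) = 0 := by
        rw [map_sub, show π (u : Fin n → F) = ρ u from rfl,
          show π (u' : Fin n → F) = ρ u' from rfl, huu, sub_self]
      have hkerE : ((u : Fin n → F) - (u' : Fin n → F)) ∈ E := by
        have hker := Submodule.ker_projectionOnto hLE
        rw [← hker]
        exact LinearMap.mem_ker.mpr hπsub
      have hKsub : ((u : Fin n → F) - (u' : Fin n → F)) ∈ Kξ := Kξ.sub_mem u.2 u'.2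
      have hmul : Ψ (((⟨_, hkerE⟩ : E) : Fin n → F)) * (c₀ + ξ • c') = 0 :=
        (hKmem _ _).mp hKsub
      have h0 := hEinj ⟨_, hkerE⟩ hmul
      have h0' : (u : Fin n → F) - (u' : Fin n → F) = 0 := by
        simpa using congrArg Subtype.val h0
      exact Subtype.ext (sub_eq_zero.mp h0')
    have hρtop : LinearMap.range ρ = ⊤ := by
      have hr1 : Module.finrank F (LinearMap.range ρ) = Module.finrank F Kξ :=
        LinearMap.finrank_range_of_inj hρinj
      apply Submodule.eq_top_of_finrank_eq
      refine le_antisymm (Submodule.finrank_le _) ?_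
      rw [hr1]
      exact hKdim
    obtain ⟨u, hu⟩ : ∃ u : Kξ, ρ u = ⟨δ, hδmem⟩ := by
      have hmem : (⟨δ, hδmem⟩ : L) ∈ LinearMap.range ρ := by rw [hρtop]; trivial
      exact hmem
    have hηE : ((u : Fin n → F) - δ) ∈ E := by
      have hπη : π ((u : Fin n → F) - δ) = 0 := by
        rw [map_sub, show π (u : Fin n → F) = ρ u from rfl, hu,
          Submodule.projectionOnto_apply_left hLE ⟨δ, hδmem⟩, sub_self]
      have hker := Submodule.ker_projectionOnto hLE
      rw [← hker]
      exact LinearMap.mem_ker.mpr hπη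
    set η : Fin n → F := (u : Fin n → F) - δ with hη
    set e' : E := ⟨η, hηE⟩ with he'
    have hueq : Ψ (u : Fin n → F) * (c₀ + ξ • c') = 0 := (hKmem _ _).mp u.2
    have hiu : Ψ (u : Fin n → F) = Ψ δ + Ψ η := by
      rw [hη, map_sub]; abel
    have hi : ξ • (Ψ δ * c') + Ψ η * c₀ + ξ • (Ψ η * c') = 0 := by
      have h := hueq
      rw [hiu, add_mul, mul_add, mul_add, mul_smul_comm, mul_smul_comm, hδ] at h
      rw [← h]; abel
    have h4 : (Ψ η * c₀ + ξ • (Ψ η * c')) + ξ • (Ψ δ * c') = 0 := by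
      rw [← hi]; abel
    have h3 : Ψ η * (c₀ + ξ • c') = -(ξ • (Ψ δ * c')) := by
      rw [mul_add, mul_smul_comm]
      exact eq_neg_of_add_eq_zero_left h4
    have hg4 : gm (c₀ + ξ • c') e' = -(ξ • T (Ψ δ * c')) := by
      rw [hgmapply]
      rw [show ((e' : Fin n → F)) = η from rfl, h3, map_neg, map_smul]
    have hmv := LinearMap.toMatrix_mulVec_repr βE βW (gm (c₀ + ξ • c')) e'
    rw [hMat, hg4] at hmv
    set xv : Fin r → F := (βE.repr e' : Fin r → F) with hxv
    have hrepr : (βW.repr (-(ξ • T (Ψ δ * c')))) = -(ξ • (βW.repr (T (Ψ δ * c')))) := by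
      rw [map_neg, map_smul]
    have hE1 : (1 + ξ • A').mulVec xv = -(ξ • w) := by
      rw [hmv, hrepr]
      funext i
      simp only [Finsupp.coe_neg, Finsupp.coe_smul, Pi.neg_apply, Pi.smul_apply, smul_eq_mul, hw]
      try rfl
    have hE2 : (1 + ξ • A').det • xv = -(ξ • ((1 + ξ • A').adjugate.mulVec w)) := by
      have h5 := congrArg ((1 + ξ • A').adjugate.mulVec) hE1
      rw [Matrix.mulVec_mulVec, Matrix.adjugate_mul, Matrix.smul_mulVec,
        Matrix.one_mulVec, Matrix.mulVec_neg, Matrix.mulVec_smul] at h5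
      exact h5
    have hχxv : χ xv = Ψ η := by
      have h6 : βE.equivFun.symm xv = e' := by
        have h7 : xv = βE.equivFun e' := by rw [Module.Basis.equivFun_apply]
        rw [h7, LinearEquiv.symm_apply_apply]
      calc χ xv = Ψ ((βE.equivFun.symm xv : E) : Fin n → F) := rfl
        _ = Ψ η := by rw [h6]
    have hsmc : ∀ cc : B, (1 + ξ • A').det • (Ψ η * cc) =
        -(ξ • (χ ((1 + ξ • A').adjugate.mulVec w) * cc)) := by
      intro cc
      have hsm : (1 + ξ • A').det • Ψ η = -(ξ • χ ((1 + ξ • A').adjugate.mulVec w)) := by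
        rw [← hχxv, ← map_smul, hE2, map_neg, map_smul]
      rw [← smul_mul_assoc, hsm, neg_mul, smul_mul_assoc]
    have hc0' : ξ • (χ ((1 + ξ • A').adjugate.mulVec w) * c₀)
        = -((1 + ξ • A').det • (Ψ η * c₀)) := by
      rw [hsmc c₀, neg_neg]
    have hc1' : ξ • (χ ((1 + ξ • A').adjugate.mulVec w) * c')
        = -((1 + ξ • A').det • (Ψ η * c')) := by
      rw [hsmc c', neg_neg]
    have hIz : ξ • (Q.eval ξ • (Ψ δ * c') - χ ((1 + ξ • A').adjugate.mulVec w) * c₀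
        - ξ • (χ ((1 + ξ • A').adjugate.mulVec w) * c')) = 0 := by
      rw [hQeval]
      calc ξ • ((1 + ξ • A').det • (Ψ δ * c') - χ ((1 + ξ • A').adjugate.mulVec w) * c₀
            - ξ • (χ ((1 + ξ • A').adjugate.mulVec w) * c'))
          = (1 + ξ • A').det • (ξ • (Ψ δ * c'))
            - ξ • (χ ((1 + ξ • A').adjugate.mulVec w) * c₀)
            - ξ • (ξ • (χ ((1 + ξ • A').adjugate.mulVec w) * c')) := by
            rw [smul_sub, smul_sub, smul_comm ξ ((1 + ξ • A').det)]
        _ = (1 + ξ • A').det • (ξ • (Ψ δ * c')) + (1 + ξ • A').det • (Ψ η * c₀)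
            + ξ • ((1 + ξ • A').det • (Ψ η * c')) := by
            rw [hc0', hc1', smul_neg, sub_neg_eq_add, sub_neg_eq_add]
        _ = (1 + ξ • A').det • (ξ • (Ψ δ * c') + Ψ η * c₀ + ξ • (Ψ η * c')) := by
            rw [smul_add, smul_add, smul_comm ξ ((1 + ξ • A').det)]
        _ = 0 := by rw [hi, smul_zero]
    rcases smul_eq_zero.mp hIz with h | h
    · exact absurd h hξ0
    · exact h
  -- expansion helpers
  have hsingle : ∀ xv : Fin r → F, ∑ i, xv i • (Pi.single i (1 : F) : Fin r → F) = xv := by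
    intro xv
    funext j
    rw [Finset.sum_apply]
    simp [Pi.single_apply]
  have hχexp : ∀ (xv : Fin r → F) (cc : B),
      χ xv * cc = ∑ i, xv i • (χ (Pi.single i (1 : F) : Fin r → F) * cc) := by
    intro xv cc
    have h7 : χ xv = ∑ i, xv i • χ (Pi.single i (1 : F) : Fin r → F) := by
      conv_lhs => rw [← hsingle xv]
      rw [map_sum]
      simp only [map_smul]
    rw [h7, Finset.sum_mul]
    refine Finset.sum_congr rfl fun i _ => ?_
    rw [smul_mul_assoc]
  set pf : Unit ⊕ (Fin r ⊕ Fin r) → Polynomial F := fun l =>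
    Sum.elim (fun _ => Q) (Sum.elim (fun i => up i) (fun i => Polynomial.X * up i)) l with hpf
  set vf : Unit ⊕ (Fin r ⊕ Fin r) → B := fun l =>
    Sum.elim (fun _ => Ψ δ * c') (Sum.elim (fun i => -(χ (Pi.single i (1 : F) : Fin r → F) * c₀))
      (fun i => -(χ (Pi.single i (1 : F) : Fin r → F) * c'))) l with hvf
  have hsum0 : ∀ ξ : F, ∑ l, (pf l).eval ξ • vf l
      = Q.eval ξ • (Ψ δ * c') - χ (((1 + ξ • A').adjugate).mulVec w) * c₀
        - ξ • (χ (((1 + ξ • A').adjugate).mulVec w) * c') := by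
    intro ξ
    rw [Fintype.sum_sum_type, Fintype.sum_sum_type]
    simp only [hpf, hvf, Sum.elim_inl, Sum.elim_inr]
    rw [Fintype.sum_unique]
    have hA : ∑ i, (up i).eval ξ • -(χ (Pi.single i (1 : F) : Fin r → F) * c₀)
        = -(χ (((1 + ξ • A').adjugate).mulVec w) * c₀) := by
      rw [hχexp (((1 + ξ • A').adjugate).mulVec w) c₀, ← Finset.sum_neg_distrib]
      refine Finset.sum_congr rfl fun i _ => ?_
      rw [hupeval, smul_neg]
    have hB : ∑ i, (Polynomial.X * up i).eval ξ • -(χ (Pi.single i (1 : F) : Fin r → F) * c')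
        = -(ξ • (χ (((1 + ξ • A').adjugate).mulVec w) * c')) := by
      rw [hχexp (((1 + ξ • A').adjugate).mulVec w) c', Finset.smul_sum,
        ← Finset.sum_neg_distrib]
      refine Finset.sum_congr rfl fun i _ => ?_
      rw [Polynomial.eval_mul, Polynomial.eval_X, hupeval, smul_neg, ← smul_neg, mul_smul,
        smul_neg, smul_neg]
    rw [hA, hB]
    abel
  have hvan := vanish pf vf hS₀inf (fun ξ hξ => by rw [hsum0 ξ]; exact main ξ hξ)
  rw [Fintype.sum_sum_type, Fintype.sum_sum_type] at hvan
  simp only [hpf, hvf, Sum.elim_inl, Sum.elim_inr] at hvan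
  rw [Fintype.sum_unique] at hvan
  have hX0 : ∀ i : Fin r, (Polynomial.X * up i).coeff 0 = 0 := by
    intro i
    rw [Polynomial.mul_coeff_zero, Polynomial.coeff_X_zero, zero_mul]
  have hC : ∑ i, (up i).coeff 0 • -(χ (Pi.single i (1 : F) : Fin r → F) * c₀) = -(χ w * c₀) := by
    rw [hχexp w c₀, ← Finset.sum_neg_distrib]
    refine Finset.sum_congr rfl fun i _ => ?_
    rw [hup0, smul_neg]
  have hD : ∑ i, (Polynomial.X * up i).coeff 0 • -(χ (Pi.single i (1 : F) : Fin r → F) * c') = 0 := by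
    refine Finset.sum_eq_zero fun i _ => ?_
    rw [hX0, zero_smul]
  rw [hQ0, hC, hD, one_smul, add_zero] at hvan
  have hfinal : Ψ δ * c' = χ w * c₀ := by
    have := hvan
    rwa [add_neg_eq_zero] at this
  rw [hfinal]
  have hrange : χ w * c₀ = f₀ (βE.equivFun.symm w) := by
    rw [hf₀apply]
    rfl
  rw [hrange]
  exact LinearMap.mem_range_self f₀ _

end Lemma11Aux



/-- **Lemma 11.** Let `F` be an infinite field and `B` an associative `F`-algebra with zero
left annihilator (`{b : bB = 0} = 0`) and `⋂_{s ≥ 1} B^s = (0)`. Then for arbitrary linearly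
independent `b₁, …, b_n ∈ B` and arbitrary `s ≥ 1` there exists `b ∈ B^s` such that
`b₁b, …, b_nb` are linearly independent. -/
theorem lemma11_independence
    (F : Type*) [Field F] [Infinite F]
    (B : Type*) [NonUnitalRing B] [Module F B] [SMulCommClass F B B] [IsScalarTower F B B]
    (h1 : ∀ b : B, (∀ x : B, b * x = 0) → b = 0)
    (h2 : ∀ b : B,
      (∀ s : ℕ, 1 ≤ s →
        b ∈ Submodule.span F {x : B | IsWord (· * ·) (Set.univ : Set B) s x}) → b = 0) :
    ∀ (n : ℕ) (b : Fin n → B), LinearIndependent F b → ∀ s : ℕ, 1 ≤ s →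
      ∃ c ∈ Submodule.span F {x : B | IsWord (· * ·) (Set.univ : Set B) s x},
        LinearIndependent F (fun i => b i * c) := by
  intro n b hb s hs
  by_contra hcon
  push_neg at hcon
  classical
  set Ψ : (Fin n → F) →ₗ[F] B :=
    { toFun := fun g => ∑ i, g i • b i
      map_add' := by intro g h; simp [add_smul, Finset.sum_add_distrib]
      map_smul' := by intro a g; simp [smul_smul, Finset.smul_sum] } with hΨdef
  have hΨapply : ∀ g, Ψ g = ∑ i, g i • b i := fun _ => rfl
  have hΨ0 : ∀ g, Ψ g = 0 → g = 0 := by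
    intro g hg
    funext i
    exact Fintype.linearIndependent_iff.mp hb g (by rw [← hΨapply]; exact hg) i
  have hKne : ∀ c ∈ Bspan F B s, ∃ g : Fin n → F,
      g ∈ LinearMap.ker ((LinearMap.mulRight F c) ∘ₗ Ψ) ∧ g ≠ 0 := by
    intro c hc
    obtain ⟨g, hg0, i, hgi⟩ := Fintype.not_linearIndependent_iff.mp (hcon c hc)
    refine ⟨g, ?_, fun h => hgi (by simp [h])⟩
    have hsum : Ψ g * c = ∑ i, g i • (b i * c) := by
      rw [hΨapply, Finset.sum_mul]
      exact Finset.sum_congr rfl fun i _ => smul_mul_assoc _ _ _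
    rw [LinearMap.mem_ker, LinearMap.comp_apply, LinearMap.mulRight_apply, hsum]
    simpa using hg0
  set KS : Set ℕ := {m | ∃ c₀ ∈ Bspan F B s,
      Module.finrank F (LinearMap.ker ((LinearMap.mulRight F c₀) ∘ₗ Ψ)) = m} with hKSdef
  have hKSne : KS.Nonempty := ⟨_, 0, Submodule.zero_mem _, rfl⟩
  obtain ⟨c₀, hc₀mem, hc₀val⟩ := Nat.sInf_mem hKSne
  have hmin : ∀ c ∈ Bspan F B s, Module.finrank F
      (LinearMap.ker ((LinearMap.mulRight F c₀) ∘ₗ Ψ)) ≤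
      Module.finrank F (LinearMap.ker ((LinearMap.mulRight F c) ∘ₗ Ψ)) := by
    intro c hc
    rw [hc₀val]
    exact Nat.sInf_le ⟨c, hc, rfl⟩
  obtain ⟨δ, hδker, hδne⟩ := hKne c₀ hc₀mem
  have hδ : Ψ δ * c₀ = 0 := by
    simpa [LinearMap.mem_ker] using hδker
  obtain ⟨W, hWfd, hdW⟩ := keyW Ψ (Bspan F B s) c₀ hc₀mem hmin hδ
  have hd0 : Ψ δ = 0 := finishV h1 h2 hs W hWfd (fun c hc => hdW c hc)
  exact hδne (hΨ0 δ hd0)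
end

section
/- For an arbitrary Jacobson radical F-algebra A there exist a Jacobson radical F-algebra Ã and an element u ∈ Ã with u³ = 0 such that A is isomorphic to a subalgebra of the right ideal uÃ; similarly, there exist such Ã and u with A isomorphic to a subalgebra of the left ideal Ãu. Moreover, if A is countable-dimensional then Ã may be chosen countable-dimensional. -/
open TensorProduct

set_option linter.unusedSectionVars false

namespace Lemma6Aux

open Cardinal

variable {F : Type u} [Field F] {A : Type v}
    [NonUnitalRing A] [Module F A] [SMulCommClass F A A] [IsScalarTower F A A]

local notation "MU" => Matrix (Fin 3) (Fin 3) (Unitization F A)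

lemma fst_sum' (s : Finset (Fin 3)) (f : Fin 3 → Unitization F A) :
    (∑ j ∈ s, f j).fst = ∑ j ∈ s, (f j).fst :=
  map_sum (Unitization.fstHom F A) f s

lemma fst_matmul (x y : MU) (p q : Fin 3) :
    ((x * y) p q).fst = ∑ j : Fin 3, (x p j).fst * (y j q).fst := by
  rw [Matrix.mul_apply, fst_sum']
  exact Finset.sum_congr rfl fun j _ => Unitization.fst_mul _ _

/-- Quasi-inverses in the unitization for elements with zero scalar part. -/
lemma qU (hJ : IsJacobsonRadical A) (a : Unitization F A) (ha : a.fst = 0) :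
    ∃ a' : Unitization F A, a'.fst = 0 ∧ a + a' + a * a' = 0 ∧ a + a' + a' * a = 0 := by
  have hu : a = Unitization.inr a.snd := by
    have := Unitization.inl_fst_add_inr_snd_eq a
    rw [ha] at this
    simpa using this.symm
  obtain ⟨b, hb1, hb2⟩ := hJ a.snd
  refine ⟨Unitization.inr b, by simp, ?_, ?_⟩
  · rw [hu, ← Unitization.inr_mul, ← Unitization.inr_add, ← Unitization.inr_add, hb1,
      Unitization.inr_zero]
  · rw [hu, ← Unitization.inr_mul, ← Unitization.inr_add, ← Unitization.inr_add, hb2,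
      Unitization.inr_zero]

/-- Quasi-inverses for matrices supported on one row, with entries of zero scalar part. -/
lemma rowInv (hJ : IsJacobsonRadical A) (i : Fin 3) (r : MU)
    (h0 : ∀ p q : Fin 3, (r p q).fst = 0) (hs : ∀ p q : Fin 3, p ≠ i → r p q = 0) :
    ∃ r' : MU, (∀ p q : Fin 3, (r' p q).fst = 0) ∧ (∀ p q : Fin 3, p ≠ i → r' p q = 0) ∧
      (1 + r) * (1 + r') = 1 ∧ (1 + r') * (1 + r) = 1 := by
  obtain ⟨a', ha'0, ha'1, ha'2⟩ := qU hJ (r i i) (h0 i i)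
  set r' : MU := Matrix.of fun p q => if p = i then (-(r i q) - a' * r i q) else 0 with hr'
  have hr'app : ∀ p q : Fin 3, r' p q = if p = i then (-(r i q) - a' * r i q) else 0 :=
    fun p q => rfl
  have hr'fst : ∀ p q : Fin 3, (r' p q).fst = 0 := by
    intro p q
    rw [hr'app]
    split
    · simp [sub_eq_add_neg, Unitization.fst_add, Unitization.fst_neg, Unitization.fst_mul,
        h0, ha'0]
    · simp
  have hr'supp : ∀ p q : Fin 3, p ≠ i → r' p q = 0 := by
    intro p q hp; rw [hr'app, if_neg hp]
  have hkey1 : r + r' + r * r' = 0 := by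
    refine Matrix.ext fun p q => ?_
    have hmul : (r * r') p q = r p i * r' i q := by
      rw [Matrix.mul_apply]
      apply Finset.sum_eq_single_of_mem i (Finset.mem_univ i)
      intro k _ hk
      rw [hr'supp k q hk, mul_zero]
    simp only [Matrix.add_apply, Matrix.zero_apply, hmul]
    by_cases hp : p = i
    · subst hp
      rw [hr'app p q, if_pos rfl]
      have expand : ∀ aq : Unitization F A,
          aq + (-aq - a' * aq) + r p p * (-aq - a' * aq)
            = -((r p p + a' + r p p * a') * aq) := by intro aq; noncomm_ring
      rw [expand, ha'1, zero_mul, neg_zero]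
    · rw [hs p q hp, hs p i hp, hr'supp p q hp, zero_mul]
      simp
  have hkey2 : r + r' + r' * r = 0 := by
    refine Matrix.ext fun p q => ?_
    have hmul : (r' * r) p q = r' p i * r i q := by
      rw [Matrix.mul_apply]
      apply Finset.sum_eq_single_of_mem i (Finset.mem_univ i)
      intro k _ hk
      rw [hs k q hk, mul_zero]
    simp only [Matrix.add_apply, Matrix.zero_apply, hmul]
    by_cases hp : p = i
    · subst hp
      rw [hr'app p q, if_pos rfl, hr'app p p, if_pos rfl]
      have expand : ∀ aq : Unitization F A,
          aq + (-aq - a' * aq) + (-(r p p) - a' * r p p) * aq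
            = -((r p p + a' + a' * r p p) * aq) := by intro aq; noncomm_ring
      rw [expand, ha'2, zero_mul, neg_zero]
    · rw [hs p q hp, hr'supp p q hp, hr'supp p i hp, zero_mul]
      simp
  refine ⟨r', hr'fst, hr'supp, ?_, ?_⟩
  · have e : (1 + r) * (1 + r') = 1 + (r + r' + r * r') := by noncomm_ring
    rw [e, hkey1, add_zero]
  · have e : (1 + r') * (1 + r) = 1 + (r + r' + r' * r) := by noncomm_ring
    rw [e, hkey2, add_zero]

/-- Peeling off rows: matrices with zero scalar part are quasi-regular. -/
lemma peel (hJ : IsJacobsonRadical A) (S : Finset (Fin 3)) :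
    ∀ m : MU, (∀ p q : Fin 3, (m p q).fst = 0) → (∀ p q : Fin 3, p ∉ S → m p q = 0) →
    ∃ m' : MU, (∀ p q : Fin 3, (m' p q).fst = 0) ∧
      (1 + m) * (1 + m') = 1 ∧ (1 + m') * (1 + m) = 1 := by
  classical
  induction S using Finset.induction_on with
  | empty =>
    intro m _ hsupp
    have hm : m = 0 := by
      refine Matrix.ext fun p q => ?_
      rw [hsupp p q (Finset.notMem_empty p), Matrix.zero_apply]
    subst hm
    exact ⟨0, by simp, by simp, by simp⟩
  | @insert i S hiS IH =>
    intro m hfst hsupp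
    set r : MU := Matrix.of fun p q => if p = i then m p q else 0 with hrdef
    have hrapp : ∀ p q : Fin 3, r p q = if p = i then m p q else 0 := fun p q => rfl
    set b : MU := m - r with hbdef
    have hbapp : ∀ p q : Fin 3, b p q = m p q - r p q := fun p q => rfl
    have hrfst : ∀ p q : Fin 3, (r p q).fst = 0 := by
      intro p q; rw [hrapp]; split
      · exact hfst p q
      · simp
    have hrsupp : ∀ p q : Fin 3, p ≠ i → r p q = 0 := by
      intro p q hp; rw [hrapp, if_neg hp]
    have hbsupp : ∀ p q : Fin 3, p ∉ S → b p q = 0 := by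
      intro p q hp
      rw [hbapp, hrapp]
      by_cases hpi : p = i
      · rw [if_pos hpi, hpi, sub_self]
      · rw [if_neg hpi, sub_zero]
        exact hsupp p q (by simp [hpi, hp])
    have hbfst : ∀ p q : Fin 3, (b p q).fst = 0 := by
      intro p q
      rw [hbapp, sub_eq_add_neg, Unitization.fst_add, Unitization.fst_neg, hfst, hrfst]
      simp
    obtain ⟨r', hr'fst, hr'supp, hrr', hr'r⟩ := rowInv hJ i r hrfst hrsupp
    set c : MU := b * (1 + r') with hcdef
    have hcfst : ∀ p q : Fin 3, (c p q).fst = 0 := by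
      intro p q
      rw [hcdef, fst_matmul]
      apply Finset.sum_eq_zero
      intro k _
      rw [hbfst, zero_mul]
    have hcsupp : ∀ p q : Fin 3, p ∉ S → c p q = 0 := by
      intro p q hp
      rw [hcdef, Matrix.mul_apply]
      apply Finset.sum_eq_zero
      intro k _
      rw [hbsupp p k hp, zero_mul]
    obtain ⟨c', hc'fst, hcc', hc'c⟩ := IH c hcfst hcsupp
    have h1m' : (1 : MU) + (r' + c' + r' * c') = (1 + r') * (1 + c') := by noncomm_ring
    have hfact : (1 + c) * (1 + r) = 1 + m := by
      have e : (1 + b * (1 + r')) * (1 + r) = (1 + r) + b * ((1 + r') * (1 + r)) := by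
        noncomm_ring
      rw [hcdef, e, hr'r, mul_one, hbdef]
      noncomm_ring
    refine ⟨r' + c' + r' * c', ?_, ?_, ?_⟩
    · intro p q
      simp only [Matrix.add_apply]
      rw [Unitization.fst_add, Unitization.fst_add, hr'fst, hc'fst, fst_matmul]
      have hz : ∑ j : Fin 3, ((r' p j).fst * (c' j q).fst) = 0 :=
        Finset.sum_eq_zero fun k _ => by rw [hc'fst, mul_zero]
      rw [hz]; ring
    · rw [h1m', ← hfact, mul_assoc (1 + c), ← mul_assoc (1 + r), hrr', one_mul, hcc']
    · rw [h1m', ← hfact, mul_assoc (1 + r'), ← mul_assoc (1 + c'), hc'c, one_mul, hr'r]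

lemma su_cube {R : Type*} [Ring R] (n : Matrix (Fin 3) (Fin 3) R)
    (h : ∀ p q : Fin 3, ¬ p < q → n p q = 0) : n * n * n = 0 := by
  have h0 : ∀ p : Fin 3, n p 0 = 0 := fun p => h p 0 (by omega)
  have h2 : ∀ q : Fin 3, n 2 q = 0 := fun q => h 2 q (by omega)
  have h11 : n 1 1 = 0 := h 1 1 (by omega)
  refine Matrix.ext fun p q => ?_
  simp [Matrix.mul_apply, Fin.sum_univ_three, h0, h2, h11]

/-- The key quasi-regularity result for the subalgebra of matrices whose scalar parts are
strictly upper triangular. -/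
lemma quasi_main (hJ : IsJacobsonRadical A) (x : MU)
    (hx : ∀ p q : Fin 3, ¬ p < q → (x p q).fst = 0) :
    ∃ x' : MU, (∀ p q : Fin 3, ¬ p < q → (x' p q).fst = 0) ∧
      x + x' + x * x' = 0 ∧ x + x' + x' * x = 0 := by
  classical
  set N : MU := Matrix.of fun p q => if p < q then Unitization.inl (x p q).fst else 0 with hN
  have hNapp : ∀ p q : Fin 3, N p q = if p < q then Unitization.inl (x p q).fst else 0 :=
    fun p q => rfl
  have hNsupp : ∀ p q : Fin 3, ¬ p < q → N p q = 0 := by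
    intro p q hpq; rw [hNapp, if_neg hpq]
  have hNfst : ∀ p q : Fin 3, (N p q).fst = (x p q).fst := by
    intro p q; rw [hNapp]; split
    · simp
    · rw [Unitization.fst_zero, hx p q (by assumption)]
  set m : MU := x - N with hm
  have hmfst : ∀ p q : Fin 3, (m p q).fst = 0 := by
    intro p q
    rw [hm, Matrix.sub_apply, sub_eq_add_neg, Unitization.fst_add, Unitization.fst_neg, hNfst]
    ring
  have hcube : N * N * N = 0 := su_cube N hNsupp
  set n' : MU := -N + N * N with hn'
  have hn'supp : ∀ p q : Fin 3, ¬ p < q → n' p q = 0 := by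
    intro p q hpq
    rw [hn', Matrix.add_apply, Matrix.neg_apply, hNsupp p q hpq, neg_zero, zero_add,
      Matrix.mul_apply]
    apply Finset.sum_eq_zero
    intro k _
    by_cases hk : p < k
    · rw [hNsupp k q (fun hkq => hpq (hk.trans hkq)), mul_zero]
    · rw [hNsupp p k hk, zero_mul]
  have hNn' : (1 + N) * (1 + n') = 1 := by
    have e : (1 + N) * (1 + (-N + N * N)) = 1 + N * N * N := by noncomm_ring
    rw [hn', e, hcube, add_zero]
  have hn'N : (1 + n') * (1 + N) = 1 := by
    have e : (1 + (-N + N * N)) * (1 + N) = 1 + N * N * N := by noncomm_ring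
    rw [hn', e, hcube, add_zero]
  set c : MU := m * (1 + n') with hc
  have hcfst : ∀ p q : Fin 3, (c p q).fst = 0 := by
    intro p q
    rw [hc, fst_matmul]
    exact Finset.sum_eq_zero fun k _ => by rw [hmfst, zero_mul]
  obtain ⟨c', hc'fst, hcc', hc'c⟩ := peel hJ Finset.univ c hcfst
    (fun p q hp => absurd (Finset.mem_univ p) hp)
  have hfact : (1 + c) * (1 + N) = 1 + x := by
    have e : (1 + m * (1 + n')) * (1 + N) = (1 + N) + m * ((1 + n') * (1 + N)) := by
      noncomm_ring
    rw [hc, e, hn'N, mul_one, hm]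
    noncomm_ring
  set x' : MU := n' + c' + n' * c' with hx'
  have h1x' : (1 : MU) + x' = (1 + n') * (1 + c') := by rw [hx']; noncomm_ring
  have hu1 : (1 + x) * (1 + x') = 1 := by
    rw [h1x', ← hfact, mul_assoc (1 + c), ← mul_assoc (1 + N), hNn', one_mul, hcc']
  have hu2 : (1 + x') * (1 + x) = 1 := by
    rw [h1x', ← hfact, mul_assoc (1 + n'), ← mul_assoc (1 + c'), hc'c, one_mul, hn'N]
  refine ⟨x', ?_, ?_, ?_⟩
  · intro p q hpq
    rw [hx', Matrix.add_apply, Matrix.add_apply, Unitization.fst_add, Unitization.fst_add,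
      hn'supp p q hpq, hc'fst, fst_matmul]
    have hz : ∑ j : Fin 3, ((n' p j).fst * (c' j q).fst) = 0 :=
      Finset.sum_eq_zero fun k _ => by rw [hc'fst, mul_zero]
    rw [hz]; simp
  · have e : (1 + x) * (1 + x') = 1 + (x + x' + x * x') := by noncomm_ring
    have h : (1 : MU) + (x + x' + x * x') = 1 + 0 := by rw [← e, hu1, add_zero]
    exact add_left_cancel h
  · have e : (1 + x') * (1 + x) = 1 + (x + x' + x' * x) := by noncomm_ring
    have h : (1 : MU) + (x + x' + x' * x) = 1 + 0 := by rw [← e, hu2, add_zero]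
    exact add_left_cancel h

variable (F A)

/-- The subalgebra of `M₃(Unitization F A)` of matrices whose scalar parts are strictly
upper triangular. -/
def At : NonUnitalSubalgebra F (Matrix (Fin 3) (Fin 3) (Unitization F A)) where
  carrier := {x : MU | ∀ p q : Fin 3, ¬ p < q → (x p q).fst = 0}
  add_mem' := by
    intro x y hx hy p q h
    rw [Matrix.add_apply, Unitization.fst_add, hx p q h, hy p q h, add_zero]
  zero_mem' := by intro p q h; simp
  mul_mem' := by
    intro x y hx hy p q h
    rw [fst_matmul]
    apply Finset.sum_eq_zero
    intro k _
    by_cases hk : p < k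
    · rw [hy k q (fun hkq => h (hk.trans hkq)), mul_zero]
    · rw [hx p k hk, zero_mul]
  smul_mem' := by
    intro c x hx p q h
    rw [Matrix.smul_apply, Unitization.fst_smul, hx p q h, smul_zero]

lemma mem_At_iff (x : MU) : x ∈ At F A ↔ ∀ p q : Fin 3, ¬ p < q → (x p q).fst = 0 :=
  Iff.rfl

lemma inr_mem_At (i j : Fin 3) (a : A) :
    Matrix.single i j (Unitization.inr a : Unitization F A) ∈ At F A := by
  intro p q _
  simp [Matrix.single, apply_ite (fun x : Unitization F A => x.fst)]

lemma radical_At (hJ : IsJacobsonRadical A) : IsJacobsonRadical (At F A) := by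
  intro a
  obtain ⟨x', hmem, h1, h2⟩ := quasi_main hJ a.1 a.2
  refine ⟨⟨x', hmem⟩, Subtype.ext ?_, Subtype.ext ?_⟩
  · simpa using h1
  · simpa using h2

/-- The square-zero-cube element `u = e₀₁ + e₁₂`. -/
def uEl : At F A :=
  ⟨Matrix.single 0 1 (1 : Unitization F A) + Matrix.single 1 2 1, by
    intro p q hpq
    fin_cases p <;> fin_cases q <;> simp_all [Matrix.single]⟩

lemma uEl_supp : ∀ p q : Fin 3, ¬ p < q → (uEl F A).1 p q = 0 := by
  intro p q hpq
  show ((Matrix.single 0 1 (1 : Unitization F A) + Matrix.single 1 2 1 :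
      Matrix (Fin 3) (Fin 3) (Unitization F A))) p q = 0
  fin_cases p <;> fin_cases q <;> simp_all [Matrix.single]

lemma uEl_cube : uEl F A * uEl F A * uEl F A = 0 := by
  refine Subtype.ext ?_
  have : (uEl F A).1 * (uEl F A).1 * (uEl F A).1 = 0 := su_cube _ (uEl_supp F A)
  simpa using this

/-- The embedding `a ↦ e₀₀ ⊗ a` into the right ideal `u·At`. -/
def phiR : A →ₙₐ[F] At F A where
  toFun a := ⟨Matrix.single 0 0 (Unitization.inr a), inr_mem_At F A 0 0 a⟩
  map_smul' c a := Subtype.ext <| by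
    simp [Unitization.inr_smul, Matrix.smul_single]
  map_zero' := Subtype.ext <| by simp
  map_add' a b := Subtype.ext <| by
    simp [Unitization.inr_add, Matrix.single_add]
  map_mul' a b := Subtype.ext <| by
    show Matrix.single 0 0 (Unitization.inr (a * b)) = _
    rw [Unitization.inr_mul]
    simp

lemma phiR_inj : Function.Injective (phiR F A) := by
  intro a b h
  have h2 := congrArg (fun z : At F A => (z : MU) 0 0) h
  have h3 : (Unitization.inr a : Unitization F A) = Unitization.inr b := by
    simpa [phiR, Matrix.single_apply_same] using h2
  exact Unitization.inr_injective h3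

lemma phiR_ideal (a : A) : ∃ x : At F A, phiR F A a = uEl F A * x := by
  refine ⟨⟨Matrix.single 1 0 (Unitization.inr a), inr_mem_At F A 1 0 a⟩, ?_⟩
  refine Subtype.ext ?_
  show Matrix.single 0 0 (Unitization.inr a)
      = (Matrix.single 0 1 (1 : Unitization F A) + Matrix.single 1 2 1)
        * Matrix.single 1 0 (Unitization.inr a)
  rw [add_mul]
  simp

/-- The embedding `a ↦ e₂₂ ⊗ a` into the left ideal `At·u`. -/
def phiL : A →ₙₐ[F] At F A where
  toFun a := ⟨Matrix.single 2 2 (Unitization.inr a), inr_mem_At F A 2 2 a⟩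
  map_smul' c a := Subtype.ext <| by
    simp [Unitization.inr_smul, Matrix.smul_single]
  map_zero' := Subtype.ext <| by simp
  map_add' a b := Subtype.ext <| by
    simp [Unitization.inr_add, Matrix.single_add]
  map_mul' a b := Subtype.ext <| by
    show Matrix.single 2 2 (Unitization.inr (a * b)) = _
    rw [Unitization.inr_mul]
    simp

lemma phiL_inj : Function.Injective (phiL F A) := by
  intro a b h
  have h2 := congrArg (fun z : At F A => (z : MU) 2 2) h
  have h3 : (Unitization.inr a : Unitization F A) = Unitization.inr b := by
    simpa [phiL, Matrix.single_apply_same] using h2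
  exact Unitization.inr_injective h3

lemma phiL_ideal (a : A) : ∃ x : At F A, phiL F A a = x * uEl F A := by
  refine ⟨⟨Matrix.single 2 1 (Unitization.inr a), inr_mem_At F A 2 1 a⟩, ?_⟩
  refine Subtype.ext ?_
  show Matrix.single 2 2 (Unitization.inr a)
      = Matrix.single 2 1 (Unitization.inr a)
        * (Matrix.single 0 1 (1 : Unitization F A) + Matrix.single 1 2 1)
  rw [mul_add]
  simp

lemma cmul {a b : Cardinal} (ha : a ≤ ℵ₀) (hb : b ≤ ℵ₀) : a * b ≤ ℵ₀ := by
  calc a * b ≤ ℵ₀ * ℵ₀ := mul_le_mul' ha hb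
  _ = ℵ₀ := Cardinal.aleph0_mul_aleph0

lemma rank_At (h : Module.rank F A ≤ Cardinal.aleph0) :
    Module.rank F (At F A) ≤ Cardinal.aleph0 := by
  have hM : Module.rank F (Matrix (Fin 3) (Fin 3) (Unitization F A)) ≤ Cardinal.aleph0 := by
    have hU : Module.rank F (Unitization F A) ≤ Cardinal.aleph0 := by
      rw [show Module.rank F (Unitization F A) = Module.rank F (F × A) from (Unitization.linearEquiv F F A).rank_eq, rank_prod]
      rw [Cardinal.add_le_aleph0]
      exact ⟨le_trans (le_of_eq (by simp)) Cardinal.one_le_aleph0,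
        (Cardinal.lift_le_aleph0).mpr h⟩
    rw [rank_matrix_module]
    refine cmul (cmul ?_ ?_) ((Cardinal.lift_le_aleph0).mpr hU) <;>
      · rw [Cardinal.lift_le_aleph0]
        exact (Cardinal.lt_aleph0_of_finite _).le
  exact le_trans (Submodule.rank_le (At F A).toSubmodule) hM

end Lemma6Aux


/-- **Lemma 6.** For an arbitrary Jacobson radical `F`-algebra `A` there exist a Jacobson
radical `F`-algebra `Ã` and `u ∈ Ã` with `u³ = 0` such that `A` embeds in the right ideal
`uÃ`; similarly for the left ideal `Ãu`. Moreover, if `A` is countable-dimensional then `Ã`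
may be chosen countable-dimensional. -/
theorem lemma6_radical_ideal_embedding
    (F : Type u) [Field F] (A : Type v)
    [NonUnitalRing A] [Module F A] [SMulCommClass F A A] [IsScalarTower F A A]
    (hJ : IsJacobsonRadical A) :
    ((∃ (At : Type (max u v)) (_ : NonUnitalRing At) (_ : Module F At)
        (_ : SMulCommClass F At At) (_ : IsScalarTower F At At),
      IsJacobsonRadical At ∧ ∃ u : At, u * u * u = 0 ∧
        ∃ φ : A →ₙₐ[F] At, Function.Injective φ ∧ ∀ a : A, ∃ x : At, φ a = u * x) ∧
    (∃ (At : Type (max u v)) (_ : NonUnitalRing At) (_ : Module F At)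
        (_ : SMulCommClass F At At) (_ : IsScalarTower F At At),
      IsJacobsonRadical At ∧ ∃ u : At, u * u * u = 0 ∧
        ∃ φ : A →ₙₐ[F] At, Function.Injective φ ∧ ∀ a : A, ∃ x : At, φ a = x * u)) ∧
    (Module.rank F A ≤ Cardinal.aleph0 →
      (∃ (At : Type (max u v)) (_ : NonUnitalRing At) (_ : Module F At)
          (_ : SMulCommClass F At At) (_ : IsScalarTower F At At),
        Module.rank F At ≤ Cardinal.aleph0 ∧
        IsJacobsonRadical At ∧ ∃ u : At, u * u * u = 0 ∧
          ∃ φ : A →ₙₐ[F] At, Function.Injective φ ∧ ∀ a : A, ∃ x : At, φ a = u * x) ∧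
      (∃ (At : Type (max u v)) (_ : NonUnitalRing At) (_ : Module F At)
          (_ : SMulCommClass F At At) (_ : IsScalarTower F At At),
        Module.rank F At ≤ Cardinal.aleph0 ∧
        IsJacobsonRadical At ∧ ∃ u : At, u * u * u = 0 ∧
          ∃ φ : A →ₙₐ[F] At, Function.Injective φ ∧ ∀ a : A, ∃ x : At, φ a = x * u)) := by
  refine ⟨⟨?_, ?_⟩, fun h => ⟨?_, ?_⟩⟩
  · exact ⟨Lemma6Aux.At F A, inferInstance, inferInstance, inferInstance, inferInstance,
      Lemma6Aux.radical_At F A hJ, Lemma6Aux.uEl F A, Lemma6Aux.uEl_cube F A,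
      Lemma6Aux.phiR F A, Lemma6Aux.phiR_inj F A, Lemma6Aux.phiR_ideal F A⟩
  · exact ⟨Lemma6Aux.At F A, inferInstance, inferInstance, inferInstance, inferInstance,
      Lemma6Aux.radical_At F A hJ, Lemma6Aux.uEl F A, Lemma6Aux.uEl_cube F A,
      Lemma6Aux.phiL F A, Lemma6Aux.phiL_inj F A, Lemma6Aux.phiL_ideal F A⟩
  · exact ⟨Lemma6Aux.At F A, inferInstance, inferInstance, inferInstance, inferInstance,
      Lemma6Aux.rank_At F A h,
      Lemma6Aux.radical_At F A hJ, Lemma6Aux.uEl F A, Lemma6Aux.uEl_cube F A,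
      Lemma6Aux.phiR F A, Lemma6Aux.phiR_inj F A, Lemma6Aux.phiR_ideal F A⟩
  · exact ⟨Lemma6Aux.At F A, inferInstance, inferInstance, inferInstance, inferInstance,
      Lemma6Aux.rank_At F A h,
      Lemma6Aux.radical_At F A hJ, Lemma6Aux.uEl F A, Lemma6Aux.uEl_cube F A,
      Lemma6Aux.phiL F A, Lemma6Aux.phiL_inj F A, Lemma6Aux.phiL_ideal F A⟩
end

section
/- Let A be a countable-dimensional F-algebra with GKdim A ≤ d, and let B be an infinite-dimensional unital F-algebra generated by a finite-dimensional subspace V. Then there exists a generating linear transformation γ: B → A such that w_γ(n) ≤ n^{d+ε_n} for all sufficiently large n, where ε_n > 0 and ε_n → 0 as n → ∞; equivalently, for every ε > 0 one has w_γ(n) ≤ n^{d+ε} for all sufficiently large n. -/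
open TensorProduct

section AuxLemmas

variable {F : Type*} [Field F]

theorem IsWord.one_le {P : Type*} {mul : P → P → P} {s : Set P} {k : ℕ} {x : P}
    (h : IsWord mul s k x) : 1 ≤ k := by
  induction h with
  | base _ => exact le_refl 1
  | mul h1 h2 ih1 ih2 => omega

theorem wordSpan_mono {P : Type*} [AddCommGroup P] [Module F P] (mul : P → P → P)
    (U : Submodule F P) {m n : ℕ} (h : m ≤ n) :
    wordSpan F mul U m ≤ wordSpan F mul U n :=
  Submodule.span_mono (fun x ⟨k, h1, h2, hw⟩ => ⟨k, h1, h2.trans h, hw⟩)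

variable {A : Type*} [NonUnitalRing A] [Module F A] [SMulCommClass F A A] [IsScalarTower F A A]

theorem mul_mem_span_span {s t : Set A} {p : Submodule F A}
    (h : ∀ x ∈ s, ∀ y ∈ t, x * y ∈ p) :
    ∀ x ∈ Submodule.span F s, ∀ y ∈ Submodule.span F t, x * y ∈ p := by
  intro x hx
  induction hx using Submodule.span_induction with
  | mem x hxs =>
    intro y hy
    induction hy using Submodule.span_induction with
    | mem y hyt => exact h x hxs y hyt
    | zero => rw [mul_zero]; exact p.zero_mem
    | add y z _ _ hy hz => rw [mul_add]; exact p.add_mem hy hz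
    | smul c y _ hy => rw [mul_smul_comm]; exact p.smul_mem c hy
  | zero => intro y hy; rw [zero_mul]; exact p.zero_mem
  | add x x' _ _ h1 h2 => intro y hy; rw [add_mul]; exact p.add_mem (h1 y hy) (h2 y hy)
  | smul cc x _ h1 => intro y hy; rw [smul_mul_assoc]; exact p.smul_mem cc (h1 y hy)

theorem mul_mem_wordSpan {U : Submodule F A} {m n : ℕ} {x y : A}
    (hx : x ∈ wordSpan F (· * ·) U m) (hy : y ∈ wordSpan F (· * ·) U n) :
    x * y ∈ wordSpan F (· * ·) U (m + n) := by
  refine mul_mem_span_span ?_ x hx y hy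
  rintro a ⟨k, hk1, hk2, hw⟩ b ⟨l, hl1, hl2, hw'⟩
  exact Submodule.subset_span ⟨k + l, by omega, by omega, hw.mul hw'⟩

theorem le_wordSpan (U : Submodule F A) {n : ℕ} (h : 1 ≤ n) :
    U ≤ wordSpan F (· * ·) U n :=
  fun x hx => Submodule.subset_span ⟨1, le_refl 1, h, IsWord.base hx⟩

theorem wordSpan_zero (U : Submodule F A) : wordSpan F (· * ·) U 0 = ⊥ := by
  refine le_bot_iff.mp ?_
  refine Submodule.span_le.mpr ?_
  rintro x ⟨k, h1, h2, -⟩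
  omega

theorem wordSpan_succ_le (U : Submodule F A) (n : ℕ) :
    wordSpan F (· * ·) U (n + 1) ≤ (U ⊔ wordSpan F (· * ·) U n) ⊔
      Submodule.span F (Set.image2 (· * ·) (wordSpan F (· * ·) U n : Set A)
        (wordSpan F (· * ·) U n : Set A)) := by
  refine Submodule.span_le.mpr ?_
  rintro x ⟨k, hk1, hk2, hw⟩
  cases hw with
  | base hx =>
    exact Submodule.mem_sup_left (Submodule.mem_sup_left hx)
  | @mul m l y z hy hz =>
    have hm := hy.one_le
    have hl := hz.one_le
    refine Submodule.mem_sup_right (Submodule.subset_span ?_)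
    exact Set.mem_image2_of_mem
      (Submodule.subset_span ⟨m, hm, by omega, hy⟩)
      (Submodule.subset_span ⟨l, hl, by omega, hz⟩)

theorem span_image2_fd (p q : Submodule F A) [FiniteDimensional F p] [FiniteDimensional F q] :
    FiniteDimensional F (Submodule.span F (Set.image2 (· * ·) (p : Set A) (q : Set A))) := by
  obtain ⟨s, hs⟩ : p.FG := (Submodule.fg_iff_finiteDimensional _).mpr ‹_›
  obtain ⟨t, ht⟩ : q.FG := (Submodule.fg_iff_finiteDimensional _).mpr ‹_›
  haveI : FiniteDimensional F (Submodule.span F (Set.image2 (· * ·) (s : Set A) (t : Set A))) :=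
    FiniteDimensional.span_of_finite F (Set.Finite.image2 _ s.finite_toSet t.finite_toSet)
  refine Submodule.finiteDimensional_of_le
    (S₂ := Submodule.span F (Set.image2 (· * ·) (s : Set A) (t : Set A)))
    (Submodule.span_le.mpr ?_)
  rintro a ⟨x, hx, y, hy, rfl⟩
  refine mul_mem_span_span (fun u hu v hv =>
    Submodule.subset_span (Set.mem_image2_of_mem hu hv)) x ?_ y ?_
  · rw [hs]; exact hx
  · rw [ht]; exact hy

theorem wordSpan_fd (U : Submodule F A) [FiniteDimensional F U] (n : ℕ) :
    FiniteDimensional F (wordSpan F (· * ·) U n) := by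
  induction n with
  | zero =>
    rw [wordSpan_zero]
    exact Submodule.finiteDimensional_of_le (S₂ := U) bot_le
  | succ n ih =>
    haveI := ih
    haveI := span_image2_fd (F := F) (wordSpan F (· * ·) U n) (wordSpan F (· * ·) U n)
    exact Submodule.finiteDimensional_of_le (wordSpan_succ_le U n)

end AuxLemmas

section AuxB

variable {F : Type*} [Field F] {B : Type*} [Ring B] [Algebra F B]

theorem exists_wordSpan_lt (hB : ¬ FiniteDimensional F B) (V : Submodule F B)
    [FiniteDimensional F V] (hV : Algebra.adjoin F (V : Set B) = ⊤) :
    ∀ m, ∃ n, m < n ∧ wordSpan F (· * ·) V m < wordSpan F (· * ·) V n := by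
  by_contra hcon
  push_neg at hcon
  obtain ⟨m, hm⟩ := hcon
  have hle : ∀ n, wordSpan F (· * ·) V n ≤ wordSpan F (· * ·) V m := by
    intro n
    rcases le_or_gt n m with h | h
    · exact wordSpan_mono _ V h
    · have h1 := wordSpan_mono (F := F) (· * ·) V h.le
      have h2 := hm n h
      rcases (lt_or_eq_of_le h1) with h3 | h3
      · exact absurd h3 h2
      · exact le_of_eq h3.symm
  set p : Submodule F B := wordSpan F (· * ·) V m ⊔ Submodule.span F {(1 : B)} with hp
  have h1p : (1 : B) ∈ p := Submodule.mem_sup_right (Submodule.mem_span_singleton_self 1)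
  have hWp : ∀ n, wordSpan F (· * ·) V n ≤ p := fun n => le_trans (hle n) le_sup_left
  have hmul : ∀ x ∈ p, ∀ y ∈ p, x * y ∈ p := by
    intro x hx y hy
    obtain ⟨w, hw, u, hu, rfl⟩ := Submodule.mem_sup.mp hx
    obtain ⟨w', hw', u', hu', rfl⟩ := Submodule.mem_sup.mp hy
    obtain ⟨cc, rfl⟩ := Submodule.mem_span_singleton.mp hu
    obtain ⟨cc', rfl⟩ := Submodule.mem_span_singleton.mp hu'
    have hww' : w * w' ∈ p := hWp (m + m) (mul_mem_wordSpan (hle m hw) (hle m hw'))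
    have e : (w + cc • 1) * (w' + cc' • 1)
        = w * w' + (cc' • w + (cc • w' + (cc' * cc) • (1 : B))) := by
      simp only [mul_add, add_mul, smul_mul_assoc, mul_smul_comm, smul_smul, mul_one, one_mul,
        smul_add]
      abel
    rw [e]
    refine p.add_mem hww' (p.add_mem ?_ (p.add_mem ?_ (p.smul_mem _ h1p)))
    · exact p.smul_mem _ (le_sup_left (a := wordSpan F (· * ·) V m) hw)
    · exact p.smul_mem _ (le_sup_left (a := wordSpan F (· * ·) V m) hw')
  set Salg : Subalgebra F B :=
    { carrier := (p : Set B)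
      mul_mem' := fun ha hb => hmul _ ha _ hb
      one_mem' := h1p
      add_mem' := fun ha hb => p.add_mem ha hb
      zero_mem' := p.zero_mem
      algebraMap_mem' := fun r => by
        rw [Algebra.algebraMap_eq_smul_one]; exact p.smul_mem r h1p } with hSalg
  have hVle : (V : Set B) ⊆ Salg := by
    intro x hx
    exact hWp 1 (le_wordSpan V (le_refl 1) hx)
  have htop : ∀ x : B, x ∈ p := by
    intro x
    have : x ∈ Algebra.adjoin F (V : Set B) := hV ▸ trivial
    exact Algebra.adjoin_le hVle this
  have hptop : p = ⊤ := eq_top_iff.mpr fun x _ => htop x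
  haveI : FiniteDimensional F (Submodule.span F ({(1 : B)} : Set B)) :=
    FiniteDimensional.span_of_finite F (Set.finite_singleton 1)
  haveI : FiniteDimensional F (wordSpan F (· * ·) V m) := wordSpan_fd V m
  haveI hfd : FiniteDimensional F p := by
    rw [hp]; infer_instance
  rw [hptop] at hfd
  exact hB (Submodule.topEquiv.finiteDimensional)

end AuxB

/-- **Lemma 7.** Let `A` be a countable-dimensional `F`-algebra with `GKdim A ≤ d`, and let
`B` be an infinite-dimensional unital `F`-algebra generated by a finite-dimensional
subspace `V`. Then there exists a generating linear transformation `γ : B → A` such that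
for every `ε > 0` one has `w_γ(n) ≤ n^{d+ε}` for all sufficiently large `n`. -/
theorem lemma7_generating_map_with_small_growth
    (F : Type*) [Field F]
    (A : Type*) [NonUnitalRing A] [Module F A] [SMulCommClass F A A] [IsScalarTower F A A]
    (hcount : Module.rank F A ≤ Cardinal.aleph0)
    (d : ℝ) (hGK : GKdimLE F A d)
    (B : Type*) [Ring B] [Algebra F B] (hB : ¬ FiniteDimensional F B)
    (V : Submodule F B) [FiniteDimensional F V]
    (hV : Algebra.adjoin F (V : Set B) = ⊤) :
    ∃ γ : B →ₗ[F] A, NonUnitalAlgebra.adjoin F (Set.range γ) = ⊤ ∧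
      ∀ ε : ℝ, 0 < ε → ∃ N : ℕ, ∀ n : ℕ, N ≤ n →
        (wfn F A B γ V n : ℝ) ≤ (n : ℝ) ^ (d + ε) := by
  classical
  -- Step 1: a countable spanning family of `A`
  obtain ⟨a, ha⟩ : ∃ a : ℕ → A, Submodule.span F (Set.range a) = ⊤ := by
    let bb := Module.Basis.ofVectorSpace F A
    haveI h1 : Countable (Module.Basis.ofVectorSpaceIndex F A) := by
      rw [← Cardinal.mk_le_aleph0_iff, bb.mk_eq_rank'']
      exact hcount
    have hcnt : (insert (0 : A) (Set.range ⇑bb)).Countable :=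
      (Set.countable_range ⇑bb).insert 0
    obtain ⟨f, hf⟩ := hcnt.exists_eq_range ⟨0, Set.mem_insert 0 _⟩
    refine ⟨f, ?_⟩
    rw [← hf, Submodule.span_insert_zero, bb.span_eq]
  set U : ℕ → Submodule F A := fun k => Submodule.span F (a '' Set.Iio k) with hU
  have hUfd : ∀ k, FiniteDimensional F (U k) := fun k =>
    FiniteDimensional.span_of_finite F ((Set.finite_Iio k).image a)
  -- exponents
  set αe : ℕ → ℝ := fun k => d + 1 / ((k : ℝ) + 1) with hαe
  have hαlt : ∀ k, d < αe k := by
    intro k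
    have h : (0:ℝ) < 1 / ((k:ℝ)+1) := by positivity
    simp only [hαe]
    linarith
  have hαmono : ∀ {j k : ℕ}, k ≤ j → αe j ≤ αe k := by
    intro j k h
    have h1 : (0:ℝ) < (k:ℝ) + 1 := by positivity
    have h2 : ((k:ℝ)+1) ≤ ((j:ℝ)+1) := by
      have := (Nat.cast_le (α := ℝ)).mpr h
      linarith
    have h3 := one_div_le_one_div_of_le h1 h2
    simp only [hαe]
    linarith
  -- growth constants
  choose c hcpos hcbound using fun k => hGK (U k) (hUfd k) (αe k) (hαlt k)
  -- thresholds
  have hTex : ∀ k : ℕ, ∃ T : ℕ, ∀ n : ℕ, T ≤ n →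
      (c (k+1) : ℝ) * ((c (k+1) * n : ℕ) : ℝ) ^ (αe (k+1)) ≤ (n : ℝ) ^ (αe k) := by
    intro k
    have hδ : (0:ℝ) < αe k - αe (k+1) := by
      have h1 : (0:ℝ) < (k:ℝ) + 1 := by positivity
      have h2 : ((k:ℝ)+1) < ((k:ℝ)+1)+1 := by linarith
      have h3 := one_div_lt_one_div_of_lt h1 h2
      simp only [hαe]
      push_cast
      linarith
    have hcr : (1:ℝ) ≤ (c (k+1) : ℝ) := by exact_mod_cast hcpos (k+1)
    have hcrpos : (0:ℝ) < (c (k+1) : ℝ) := by linarith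
    have htend : Filter.Tendsto (fun n : ℕ => ((n:ℝ)) ^ (αe k - αe (k+1)))
        Filter.atTop Filter.atTop :=
      (tendsto_rpow_atTop hδ).comp tendsto_natCast_atTop_atTop
    obtain ⟨N, hN⟩ := Filter.eventually_atTop.mp
      (htend.eventually_ge_atTop ((c (k+1) : ℝ) ^ ((1:ℝ) + αe (k+1))))
    refine ⟨max N 1, fun n hn => ?_⟩
    have hn1 : 1 ≤ n := le_trans (le_max_right N 1) hn
    have hnpos : (0:ℝ) < (n:ℝ) := by exact_mod_cast hn1
    have hNn := hN n (le_trans (le_max_left N 1) hn)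
    have e1 : ((c (k+1) * n : ℕ) : ℝ) = (c (k+1) : ℝ) * (n:ℝ) := by push_cast; ring
    rw [e1, Real.mul_rpow (le_of_lt hcrpos) (le_of_lt hnpos)]
    calc (c (k+1) : ℝ) * ((c (k+1):ℝ) ^ (αe (k+1)) * (n:ℝ) ^ (αe (k+1)))
        = (c (k+1) : ℝ) ^ ((1:ℝ) + αe (k+1)) * (n:ℝ) ^ (αe (k+1)) := by
          rw [Real.rpow_add hcrpos 1 (αe (k+1)), Real.rpow_one]; ring
      _ ≤ (n:ℝ) ^ (αe k - αe (k+1)) * (n:ℝ) ^ (αe (k+1)) :=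
          mul_le_mul_of_nonneg_right hNn (Real.rpow_nonneg (le_of_lt hnpos) _)
      _ = (n:ℝ) ^ (αe k) := by
          rw [← Real.rpow_add hnpos]
          congr 1
          ring
  choose T hT using hTex
  -- strictly increasing word spans in B
  choose g hg1 hg2 using exists_wordSpan_lt hB V hV
  set nseq : ℕ → ℕ := fun k => Nat.rec 0 (fun k prev => g (max prev (T (k+1)))) k with hnseq
  have hnseq0 : nseq 0 = 0 := rfl
  have hnsucc : ∀ k, nseq (k+1) = g (max (nseq k) (T (k+1))) := fun k => rfl
  have hnlt : ∀ k, nseq k < nseq (k+1) := by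
    intro k
    rw [hnsucc k]
    exact lt_of_le_of_lt (le_max_left _ _) (hg1 _)
  have hnmono : StrictMono nseq := strictMono_nat_of_lt_succ hnlt
  have hTle : ∀ k, T (k+1) ≤ nseq (k+1) := by
    intro k
    rw [hnsucc k]
    exact le_of_lt (lt_of_le_of_lt (le_max_right _ _) (hg1 _))
  set W : ℕ → Submodule F B := fun k => wordSpan F (· * ·) V (nseq k) with hWdef
  have hWlt : ∀ k, W k < W (k+1) := by
    intro k
    refine lt_of_le_of_lt (wordSpan_mono (· * ·) V (le_max_left (nseq k) (T (k+1)))) ?_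
    have : W (k+1) = wordSpan F (· * ·) V (g (max (nseq k) (T (k+1)))) := by
      rw [hWdef]
    rw [this]
    exact hg2 _
  have hWmono : Monotone W := monotone_nat_of_le_succ (fun k => (hWlt k).le)
  set S : Submodule F B := ⨆ k, W k with hSdef
  obtain ⟨C, hC⟩ := Submodule.exists_isCompl S
  -- functionals
  have hψex : ∀ k : ℕ, ∃ ψ : B →ₗ[F] F,
      (∀ x ∈ W k ⊔ C, ψ x = 0) ∧ ∃ x ∈ W (k+1), ψ x ≠ 0 := by
    intro k
    have hnot : ¬ (W (k+1) ≤ W k ⊔ C) := by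
      intro hle2
      refine (hWlt k).not_ge ?_
      intro x hx
      obtain ⟨y, hy, z, hz, hyz⟩ := Submodule.mem_sup.mp (hle2 hx)
      have hzS : z ∈ S := by
        have hxS : x ∈ S := le_iSup W (k+1) hx
        have hyS : y ∈ S := le_iSup W k hy
        have hzxy : z = x - y := by rw [← hyz]; abel
        rw [hzxy]
        exact S.sub_mem hxS hyS
      have hz0 : z = 0 := by
        have := hC.disjoint.le_bot (Submodule.mem_inf.mpr ⟨hzS, hz⟩)
        simpa using this
      rw [← hyz, hz0, add_zero]
      exact hy
    obtain ⟨y, hy, hy'⟩ := SetLike.not_le_iff_exists.mp hnot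
    have hne : (Submodule.Quotient.mk y : B ⧸ (W k ⊔ C)) ≠ 0 := by
      rw [Ne, Submodule.Quotient.mk_eq_zero]
      exact hy'
    have hnall : ¬ ∀ φ : Module.Dual F (B ⧸ (W k ⊔ C)),
        φ (Submodule.Quotient.mk y) = 0 := by
      rw [Module.forall_dual_apply_eq_zero_iff]
      exact hne
    obtain ⟨φ, hφ⟩ := not_forall.mp hnall
    refine ⟨φ.comp (W k ⊔ C).mkQ, fun x hx => ?_, ⟨y, hy, hφ⟩⟩
    have hx0 : (W k ⊔ C).mkQ x = 0 := by
      rw [Submodule.mkQ_apply, Submodule.Quotient.mk_eq_zero]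
      exact hx
    simp [LinearMap.comp_apply, hx0]
  choose ψ hψ0 hψx using hψex
  have hψW : ∀ (j k : ℕ), j ≤ k → ∀ x ∈ W j, ψ k x = 0 :=
    fun j k hjk x hx => hψ0 k x (Submodule.mem_sup_left (hWmono hjk hx))
  have hsupp : ∀ x : B, ∃ j : ℕ, ∀ k, j ≤ k → ψ k x = 0 := by
    intro x
    have hx : x ∈ S ⊔ C := by
      rw [hC.sup_eq_top]
      trivial
    obtain ⟨s, hs, z, hz, hsz⟩ := Submodule.mem_sup.mp hx
    obtain ⟨j, hj⟩ := (Submodule.mem_iSup_of_directed W hWmono.directed_le).mp hs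
    refine ⟨j, fun k hk => ?_⟩
    have h1 : ψ k s = 0 := hψW j k hk s hj
    have h2 : ψ k z = 0 := hψ0 k z (Submodule.mem_sup_right hz)
    rw [← hsz, map_add, h1, h2, add_zero]
  have hfin : ∀ x : B, (Function.support fun k => ψ k x • a k).Finite := by
    intro x
    obtain ⟨j, hj⟩ := hsupp x
    refine Set.Finite.subset (Set.finite_Iio j) ?_
    intro k hk
    simp only [Function.mem_support] at hk
    simp only [Set.mem_Iio]
    by_contra hkj
    push_neg at hkj
    exact hk (by rw [hj k hkj, zero_smul])
  have hγadd : ∀ x y : B, (∑ᶠ k, ψ k (x + y) • a k)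
      = (∑ᶠ k, ψ k x • a k) + (∑ᶠ k, ψ k y • a k) := by
    intro x y
    rw [← finsum_add_distrib (hfin x) (hfin y)]
    congr 1
    funext k
    rw [map_add, add_smul]
  have hγsmul : ∀ (cc : F) (x : B), (∑ᶠ k, ψ k (cc • x) • a k)
      = cc • (∑ᶠ k, ψ k x • a k) := by
    intro cc x
    rw [smul_finsum' cc (hfin x)]
    congr 1
    funext k
    rw [map_smul, smul_eq_mul, mul_smul]
  set γ : B →ₗ[F] A :=
    { toFun := fun x => ∑ᶠ k, ψ k x • a k
      map_add' := hγadd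
      map_smul' := hγsmul } with hγdef
  have hγeval : ∀ (j : ℕ) (b : B), b ∈ W j →
      γ b = ∑ k ∈ Finset.range j, ψ k b • a k := by
    intro j b hb
    show (∑ᶠ k, ψ k b • a k) = _
    refine finsum_eq_sum_of_support_subset _ ?_
    intro k hk
    simp only [Function.mem_support] at hk
    simp only [Finset.coe_range, Set.mem_Iio]
    by_contra hkj
    push_neg at hkj
    exact hk (by rw [hψW j k hkj b hb, zero_smul])
  have hmemU : ∀ (j : ℕ) (b : B), b ∈ W j → γ b ∈ U j := by
    intro j b hb
    rw [hγeval j b hb]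
    refine Submodule.sum_mem _ ?_
    intro k hk
    refine Submodule.smul_mem _ _ (Submodule.subset_span ?_)
    exact Set.mem_image_of_mem a (Finset.mem_range.mp hk)
  refine ⟨γ, ?_, ?_⟩
  · -- the image of γ generates A
    have hspan : ∀ k : ℕ, a k ∈ Submodule.span F (Set.range ⇑γ) := by
      intro k
      induction k using Nat.strong_induction_on with
      | _ k ih =>
        obtain ⟨x, hxW, hx0⟩ := hψx k
        have he : γ x = ∑ k' ∈ Finset.range (k+1), ψ k' x • a k' := hγeval (k+1) x hxW
        have h1 : ψ k x • a k = γ x - ∑ k' ∈ Finset.range k, ψ k' x • a k' := by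
          rw [he, Finset.sum_range_succ]
          abel
        have h2 : a k = (ψ k x)⁻¹ • (ψ k x • a k) := by
          rw [smul_smul, inv_mul_cancel₀ hx0, one_smul]
        rw [h2, h1]
        refine Submodule.smul_mem _ _ (Submodule.sub_mem _ ?_ ?_)
        · exact Submodule.subset_span ⟨x, rfl⟩
        · exact Submodule.sum_mem _ (fun k' hk' =>
            Submodule.smul_mem _ _ (ih k' (Finset.mem_range.mp hk')))
    have hsp : Submodule.span F (Set.range ⇑γ) = ⊤ := by
      rw [eq_top_iff, ← ha]
      refine Submodule.span_le.mpr ?_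
      rintro _ ⟨k, rfl⟩
      exact hspan k
    rw [eq_top_iff]
    intro x _
    have hx : x ∈ Submodule.span F (Set.range ⇑γ) := by
      rw [hsp]
      trivial
    have hle : Submodule.span F (Set.range ⇑γ) ≤
        (NonUnitalAlgebra.adjoin F (Set.range ⇑γ)).toSubmodule :=
      Submodule.span_le.mpr (NonUnitalAlgebra.subset_adjoin F)
    exact (NonUnitalSubalgebra.mem_toSubmodule _).mp (hle hx)
  · -- the growth estimate
    have hWsub : ∀ (K n : ℕ), n ≤ nseq K →
        Wspan F A B γ V n ≤ wordSpan F (· * ·) (U K) n := by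
      intro K n hn
      refine Submodule.span_le.mpr ?_
      rintro x ⟨k, hk, hw⟩
      have key : ∀ (k : ℕ) (x : A), GammaWord F A B γ V k x → k ≤ nseq K →
          x ∈ wordSpan F (· * ·) (U K) k := by
        intro k x hw
        induction hw with
        | @base i hi b hb =>
          intro hik
          have hbW : b ∈ W K := wordSpan_mono (· * ·) V hik hb
          exact le_wordSpan (U K) hi (hmemU K b hbW)
        | @mul m l y z hy hz ihy ihz =>
          intro hml
          exact mul_mem_wordSpan (ihy (by omega)) (ihz (by omega))
      exact wordSpan_mono (· * ·) (U K) hk (key k x hw (le_trans hk hn))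
    intro ε hε
    obtain ⟨k0, hk0⟩ := exists_nat_one_div_lt hε
    refine ⟨nseq (k0 + 1) + 1, fun n hn => ?_⟩
    have hnk : nseq (k0+1) < n := by omega
    have hn1 : 1 ≤ n := by omega
    have hn1R : (1:ℝ) ≤ (n:ℝ) := by exact_mod_cast hn1
    have hexist : ∃ K, n ≤ nseq K := ⟨n, hnmono.le_apply⟩
    have hfpos : Nat.find hexist ≠ 0 := by
      intro h0
      have hsp := Nat.find_spec hexist
      rw [h0, hnseq0] at hsp
      omega
    obtain ⟨J, hJeq⟩ : ∃ J, Nat.find hexist = J + 1 :=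
      ⟨Nat.find hexist - 1, by omega⟩
    have hK0le : n ≤ nseq (J+1) := by
      rw [← hJeq]
      exact Nat.find_spec hexist
    have hJlt : nseq J < n := by
      by_contra hcon
      push_neg at hcon
      exact Nat.find_min hexist (by omega) hcon
    have hJge : k0 + 1 ≤ J := by
      by_contra hcon
      push_neg at hcon
      have h7 : J + 1 ≤ k0 + 1 := by omega
      have h5 : nseq (J+1) ≤ nseq (k0+1) := hnmono.monotone h7
      omega
    obtain ⟨J', hJ'⟩ : ∃ J', J = J' + 1 := ⟨J - 1, by omega⟩
    have hTJ : T J ≤ n := by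
      have h6 := hTle J'
      rw [← hJ'] at h6
      omega
    haveI := hUfd (J+1)
    haveI := wordSpan_fd (F := F) (U (J+1)) n
    have step1 : wfn F A B γ V n ≤ growthFn F (· * ·) (U (J+1)) n :=
      Submodule.finrank_mono (hWsub (J+1) n hK0le)
    calc (wfn F A B γ V n : ℝ)
        ≤ (growthFn F (· * ·) (U (J+1)) n : ℝ) := by exact_mod_cast step1
      _ ≤ (c (J+1) : ℝ) * ((c (J+1) * n : ℕ) : ℝ) ^ (αe (J+1)) := hcbound (J+1) n
      _ ≤ (n:ℝ) ^ (αe J) := hT J n hTJ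
      _ ≤ (n:ℝ) ^ (αe (k0+1)) := Real.rpow_le_rpow_of_exponent_le hn1R (hαmono hJge)
      _ ≤ (n:ℝ) ^ (d + ε) := by
          refine Real.rpow_le_rpow_of_exponent_le hn1R ?_
          have h1 : αe (k0+1) = d + 1 / ((k0:ℝ) + 1 + 1) := by
            simp only [hαe]
            push_cast
            ring
          have h2 : 1 / ((k0:ℝ)+1+1) ≤ 1 / ((k0:ℝ)+1) := by
            refine one_div_le_one_div_of_le (by positivity) (by linarith)
          rw [h1]
          linarith [hk0]
end
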